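/- arXiv:1812.11364 — 10 statements merged into one kernel-verified Lean document; each statement's English description precedes it below -/
import Mathlib

section
/- Fix b ∈ ℝ, μ > 0 and σ_b > 0. Let g ∈ L¹(ℝ, ℂ) with Fourier transform ĝ, and set ψ̂(ξ) = conj(ĝ(σ_b(μ − ξ))). Let X ∈ L¹(ℝ, ℂ) vanish a.e. on (−∞, 0], and let x(b) = ∫₀^∞ X(ξ) e^{2πibξ} dξ (an analytic signal evaluated at b). Assume ∫₀^∞ |ψ̂(ξ)|/ξ dξ < ∞, and define c_ψ(b) = ∫₀^∞ conj(ψ̂(ξ)) ξ⁻¹ dξ and, for a > 0, the adaptive CWT in frequency form W̃(a) = ∫₀^∞ X(ξ) conj(ψ̂(aξ)) e^{2πibξ} dξ. Then ∫₀^∞ W̃(a) a⁻¹ da = c_ψ(b) · x(b). -/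
open MeasureTheory Real

/-- Recovery of an analytic signal from its adaptive CWT:
`∫₀^∞ W̃(a)/a da = c_ψ(b) · x(b)`. -/
theorem adaptive_cwt_recovery_analytic
    (b μ σb : ℝ) (hμ : 0 < μ) (hσb : 0 < σb)
    (g : ℝ → ℂ) (hg : Integrable g)
    (ghat : ℝ → ℂ)
    (hghat : ∀ ξ : ℝ, ghat ξ = ∫ t : ℝ, g t * Complex.exp (-2 * π * Complex.I * ξ * t))
    (ψhat : ℝ → ℂ)
    (hψhat : ∀ ξ : ℝ, ψhat ξ = starRingEnd ℂ (ghat (σb * (μ - ξ))))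
    (X : ℝ → ℂ) (hX : Integrable X)
    (hXsupp : ∀ᵐ ξ : ℝ, ξ ≤ 0 → X ξ = 0)
    (xb : ℂ)
    (hxb : xb = ∫ ξ in Set.Ioi (0 : ℝ), X ξ * Complex.exp (2 * π * Complex.I * b * ξ))
    (hadm : IntegrableOn (fun ξ : ℝ => ‖ψhat ξ‖ / ξ) (Set.Ioi (0 : ℝ)))
    (cψ : ℂ)
    (hcψ : cψ = ∫ ξ in Set.Ioi (0 : ℝ), starRingEnd ℂ (ψhat ξ) * (ξ : ℂ)⁻¹)
    (W : ℝ → ℂ)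
    (hW : ∀ a : ℝ, W a =
      ∫ ξ in Set.Ioi (0 : ℝ), X ξ * starRingEnd ℂ (ψhat (a * ξ)) * Complex.exp (2 * π * Complex.I * b * ξ)) :
    ∫ a in Set.Ioi (0 : ℝ), W a * (a : ℂ)⁻¹ = cψ * xb := by
  classical
  -- continuity of ghat
  have hghat_cont : Continuous ghat := by
    have : ghat = fun ξ : ℝ => ∫ t : ℝ, g t * Complex.exp (-2 * π * Complex.I * ξ * t) :=
      funext hghat
    rw [this]
    apply continuous_of_dominated (bound := fun t => ‖g t‖)
    · intro ξ
      exact hg.1.mul (Complex.continuous_exp.comp (by fun_prop)).aestronglyMeasurable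
    · intro ξ
      filter_upwards with t
      rw [norm_mul]
      have h1 : (-2 * ↑π * Complex.I * ↑ξ * ↑t : ℂ) = ((-2 * π * ξ * t : ℝ) : ℂ) * Complex.I := by
        push_cast; ring
      rw [h1]
      have := Complex.norm_exp_ofReal_mul_I (-2 * π * ξ * t)
      simp only [this, mul_one, le_refl]
    · exact hg.norm
    · filter_upwards with t
      exact continuous_const.mul (Complex.continuous_exp.comp
        ((continuous_const.mul Complex.continuous_ofReal).mul continuous_const))
  have hψcont : Continuous ψhat := by
    have : ψhat = fun ξ => starRingEnd ℂ (ghat (σb * (μ - ξ))) := funext hψhat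
    rw [this]
    exact continuous_star.comp (hghat_cont.comp (by fun_prop))
  -- the density f
  set f : ℝ → ℂ := fun u => starRingEnd ℂ (ψhat u) * (u : ℂ)⁻¹ with hf_def
  have hf_meas : AEStronglyMeasurable f volume :=
    ((continuous_star.comp hψcont).aestronglyMeasurable).mul
      ((Complex.measurable_ofReal.comp measurable_id).inv.aestronglyMeasurable)
  have hf_norm : ∀ u : ℝ, 0 < u → ‖f u‖ = ‖ψhat u‖ / u := by
    intro u hu
    simp only [hf_def, norm_mul, norm_inv, RCLike.norm_conj, Complex.norm_real,
      Real.norm_eq_abs, abs_of_pos hu, div_eq_mul_inv]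
  have hf_int : IntegrableOn f (Set.Ioi (0 : ℝ)) := by
    apply Integrable.mono' hadm hf_meas.restrict
    filter_upwards [ae_restrict_mem measurableSet_Ioi] with u hu
    rw [hf_norm u hu]
  have hnf_int : IntegrableOn (fun u => ‖f u‖) (Set.Ioi (0 : ℝ)) := hf_int.norm
  set K : ℝ := ∫ u in Set.Ioi (0 : ℝ), ‖f u‖ with hK_def
  have hcψ' : cψ = ∫ u in Set.Ioi (0 : ℝ), f u := hcψ
  -- scaling identities for ξ > 0
  have hG_eq : ∀ ξ : ℝ, 0 < ξ → ∀ a : ℝ,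
      starRingEnd ℂ (ψhat (a * ξ)) * (a : ℂ)⁻¹ = (ξ : ℂ) * f (a * ξ) := by
    intro ξ hξ a
    simp only [hf_def]
    push_cast
    have hξ' : (ξ : ℂ) ≠ 0 := Complex.ofReal_ne_zero.2 hξ.ne'
    rw [mul_inv, show (ξ:ℂ) * (starRingEnd ℂ (ψhat (a*ξ)) * ((a:ℂ)⁻¹ * (ξ:ℂ)⁻¹)) =
      (starRingEnd ℂ (ψhat (a*ξ)) * (a:ℂ)⁻¹) * ((ξ:ℂ) * (ξ:ℂ)⁻¹) from by ring,
      mul_inv_cancel₀ hξ', mul_one]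
  have hG_int : ∀ ξ : ℝ, 0 < ξ →
      IntegrableOn (fun a => starRingEnd ℂ (ψhat (a * ξ)) * (a : ℂ)⁻¹) (Set.Ioi (0 : ℝ)) := by
    intro ξ hξ
    have h1 : IntegrableOn (fun a => f (a * ξ)) (Set.Ioi (0 : ℝ)) := by
      have := (integrableOn_Ioi_comp_mul_right_iff f 0 hξ).2 (by simpa using hf_int)
      simpa using this
    have h2 : IntegrableOn (fun a => (ξ:ℂ) * f (a * ξ)) (Set.Ioi (0:ℝ)) := h1.const_mul (ξ : ℂ)
    exact h2.congr_fun (fun a _ => (hG_eq ξ hξ a).symm) measurableSet_Ioi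
  have hG_intval : ∀ ξ : ℝ, 0 < ξ →
      ∫ a in Set.Ioi (0 : ℝ), starRingEnd ℂ (ψhat (a * ξ)) * (a : ℂ)⁻¹ = cψ := by
    intro ξ hξ
    have h0 : ∀ a : ℝ, starRingEnd ℂ (ψhat (a * ξ)) * (a : ℂ)⁻¹ = (ξ : ℂ) * f (a * ξ) :=
      hG_eq ξ hξ
    rw [setIntegral_congr_fun measurableSet_Ioi (fun a _ => h0 a)]
    rw [integral_const_mul]
    have h2 : ∫ a in Set.Ioi (0 : ℝ), f (a * ξ) = ξ⁻¹ • ∫ u in Set.Ioi (0 : ℝ), f u := by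
      have := integral_comp_mul_right_Ioi f 0 hξ
      simpa using this
    rw [h2, hcψ']
    have hξ' : (ξ : ℂ) ≠ 0 := Complex.ofReal_ne_zero.2 hξ.ne'
    rw [Complex.real_smul, Complex.ofReal_inv, ← mul_assoc, mul_inv_cancel₀ hξ', one_mul]
  -- norm version of the scaling identity
  have hGn_val : ∀ ξ : ℝ, 0 < ξ →
      ∫ a in Set.Ioi (0:ℝ), ‖starRingEnd ℂ (ψhat (a * ξ)) * (a : ℂ)⁻¹‖ = K := by
    intro ξ hξ
    have h0 : ∀ a : ℝ, ‖starRingEnd ℂ (ψhat (a*ξ)) * (a:ℂ)⁻¹‖ = ξ * ‖f (a*ξ)‖ := by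
      intro a
      rw [hG_eq ξ hξ a, norm_mul, Complex.norm_real, Real.norm_eq_abs, abs_of_pos hξ]
    rw [setIntegral_congr_fun measurableSet_Ioi (fun a _ => h0 a), integral_const_mul]
    have h2 : ∫ a in Set.Ioi (0:ℝ), ‖f (a * ξ)‖ = ξ⁻¹ • ∫ u in Set.Ioi (0:ℝ), ‖f u‖ := by
      have := integral_comp_mul_right_Ioi (fun u => ‖f u‖) 0 hξ
      simpa using this
    rw [h2, smul_eq_mul, ← mul_assoc, mul_inv_cancel₀ hξ.ne', one_mul, hK_def]
  -- the oscillating factor has norm one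
  have hE : ∀ ξ : ℝ, ‖Complex.exp (2 * π * Complex.I * b * ξ)‖ = 1 := by
    intro ξ
    have h1 : (2 * ↑π * Complex.I * ↑b * ↑ξ : ℂ) = ((2 * π * b * ξ : ℝ) : ℂ) * Complex.I := by
      push_cast; ring
    rw [h1]
    simpa using Complex.norm_exp_ofReal_mul_I (2 * π * b * ξ)
  -- product function and its integrability
  set Fp : ℝ × ℝ → ℂ := fun p =>
    X p.2 * starRingEnd ℂ (ψhat (p.1 * p.2)) * Complex.exp (2 * π * Complex.I * b * p.2)
      * (p.1 : ℂ)⁻¹ with hFp_def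
  set ν : Measure ℝ := volume.restrict (Set.Ioi (0:ℝ)) with hν_def
  have hmeas : AEStronglyMeasurable Fp (ν.prod ν) := by
    have h1 : AEStronglyMeasurable (fun p : ℝ × ℝ => X p.2) (ν.prod ν) :=
      (hX.1.restrict (s := Set.Ioi (0:ℝ))).comp_snd
    have h2 : AEStronglyMeasurable (fun p : ℝ × ℝ => starRingEnd ℂ (ψhat (p.1 * p.2)))
        (ν.prod ν) :=
      (continuous_star.comp (hψcont.comp (continuous_fst.mul continuous_snd))).aestronglyMeasurable
    have h3 : AEStronglyMeasurable (fun p : ℝ × ℝ => Complex.exp (2 * π * Complex.I * b * p.2))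
        (ν.prod ν) :=
      (Complex.continuous_exp.comp
        (continuous_const.mul (Complex.continuous_ofReal.comp continuous_snd))).aestronglyMeasurable
    have h4 : AEStronglyMeasurable (fun p : ℝ × ℝ => ((p.1 : ℂ))⁻¹) (ν.prod ν) :=
      ((Complex.measurable_ofReal.comp measurable_fst).inv).aestronglyMeasurable
    exact ((h1.mul h2).mul h3).mul h4
  have hFp_int : Integrable Fp (ν.prod ν) := by
    rw [integrable_prod_iff' hmeas]
    constructor
    · filter_upwards [ae_restrict_mem measurableSet_Ioi] with ξ hξ
      have h1 := (hG_int ξ hξ).const_mul (X ξ * Complex.exp (2 * π * Complex.I * b * ξ))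
      exact h1.congr (Filter.Eventually.of_forall fun a => by simp only [hFp_def]; ring)
    · have he : (fun ξ => ∫ a, ‖Fp (a, ξ)‖ ∂ν) =ᵐ[ν] fun ξ => ‖X ξ‖ * K := by
        filter_upwards [ae_restrict_mem measurableSet_Ioi] with ξ hξ
        have hnorm : ∀ a : ℝ, ‖Fp (a, ξ)‖ =
            ‖X ξ‖ * ‖starRingEnd ℂ (ψhat (a * ξ)) * (a : ℂ)⁻¹‖ := by
          intro a
          simp only [hFp_def, norm_mul, hE ξ, mul_one]
          ring
        calc ∫ a, ‖Fp (a, ξ)‖ ∂ν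
            = ∫ a in Set.Ioi (0:ℝ), ‖X ξ‖ * ‖starRingEnd ℂ (ψhat (a * ξ)) * (a : ℂ)⁻¹‖ := by
              rw [hν_def]; exact setIntegral_congr_fun measurableSet_Ioi (fun a _ => hnorm a)
          _ = ‖X ξ‖ * ∫ a in Set.Ioi (0:ℝ), ‖starRingEnd ℂ (ψhat (a * ξ)) * (a : ℂ)⁻¹‖ :=
              integral_const_mul _ _
          _ = ‖X ξ‖ * K := by rw [hGn_val ξ hξ]
      exact ((hX.restrict.norm.mul_const K)).congr he.symm
  -- main computation
  have hL : ∀ a : ℝ, W a * (a : ℂ)⁻¹ = ∫ ξ in Set.Ioi (0:ℝ), Fp (a, ξ) := by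
    intro a
    rw [hW a, ← integral_mul_const]
  have hswap : ∫ a, (∫ ξ, Fp (a, ξ) ∂ν) ∂ν = ∫ ξ, (∫ a, Fp (a, ξ) ∂ν) ∂ν :=
    integral_integral_swap (f := fun a ξ => Fp (a, ξ)) hFp_int
  have hR : ∫ ξ, (∫ a, Fp (a, ξ) ∂ν) ∂ν = cψ * xb := by
    have he : (fun ξ => ∫ a, Fp (a, ξ) ∂ν) =ᵐ[ν]
        fun ξ => cψ * (X ξ * Complex.exp (2 * π * Complex.I * b * ξ)) := by
      filter_upwards [ae_restrict_mem measurableSet_Ioi] with ξ hξ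
      calc ∫ a, Fp (a, ξ) ∂ν
          = ∫ a in Set.Ioi (0:ℝ), (X ξ * Complex.exp (2 * π * Complex.I * b * ξ)) *
              (starRingEnd ℂ (ψhat (a * ξ)) * (a : ℂ)⁻¹) := by
            rw [hν_def]
            exact setIntegral_congr_fun measurableSet_Ioi
              (fun a _ => by simp only [hFp_def]; ring)
        _ = (X ξ * Complex.exp (2 * π * Complex.I * b * ξ)) *
              ∫ a in Set.Ioi (0:ℝ), starRingEnd ℂ (ψhat (a * ξ)) * (a : ℂ)⁻¹ :=
            integral_const_mul _ _
        _ = cψ * (X ξ * Complex.exp (2 * π * Complex.I * b * ξ)) := by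
            rw [hG_intval ξ hξ]; ring
    rw [integral_congr_ae he, integral_const_mul, hν_def, ← hxb]
  calc ∫ a in Set.Ioi (0:ℝ), W a * (a : ℂ)⁻¹
      = ∫ a in Set.Ioi (0:ℝ), ∫ ξ in Set.Ioi (0:ℝ), Fp (a, ξ) :=
        setIntegral_congr_fun measurableSet_Ioi (fun a _ => hL a)
    _ = ∫ ξ, (∫ a, Fp (a, ξ) ∂ν) ∂ν := hswap
    _ = cψ * xb := hR
end

section
/- Fix b ∈ ℝ, μ > 0 and σ_b > 0. Let g ∈ L¹(ℝ, ℂ) with Fourier transform ĝ, and set ψ̂(ξ) = conj(ĝ(σ_b(μ − ξ))). Let X ∈ L¹(ℝ, ℂ) satisfy conj(X(ξ)) = X(−ξ) for a.e. ξ (so x(b) = ∫_ℝ X(ξ) e^{2πibξ} dξ is real-valued). Assume ∫₀^∞ |ψ̂(ξ)|/ξ dξ < ∞, let c_ψ(b) = ∫₀^∞ conj(ψ̂(ξ)) ξ⁻¹ dξ be nonzero, and for a > 0 define W̃(a) = ∫₀^∞ X(ξ) conj(ψ̂(aξ)) e^{2πibξ} dξ (the adaptive CWT of x with an analytic wavelet,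 which only sees positive frequencies). Then x(b) = Re( (2/c_ψ(b)) ∫₀^∞ W̃(a) a⁻¹ da ). -/
open MeasureTheory Real

lemma scale_valC (F : ℝ → ℂ) {ξ : ℝ} (hξ : 0 < ξ) :
    ∫ a in Set.Ioi (0:ℝ), F (a * ξ) * (a:ℂ)⁻¹ = ∫ u in Set.Ioi (0:ℝ), F u * (u:ℂ)⁻¹ := by
  have h1 : ∀ a ∈ Set.Ioi (0:ℝ), F (a * ξ) * (a:ℂ)⁻¹
      = (ξ:ℂ) * ((fun u => F u * (u:ℂ)⁻¹) (a * ξ)) := by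
    intro a ha
    have ha' : (a:ℂ) ≠ 0 := Complex.ofReal_ne_zero.2 (ne_of_gt ha)
    have hξ' : (ξ:ℂ) ≠ 0 := Complex.ofReal_ne_zero.2 hξ.ne'
    push_cast
    field_simp
  rw [setIntegral_congr_fun measurableSet_Ioi h1, integral_const_mul,
    integral_comp_mul_right_Ioi (fun u => F u * (u:ℂ)⁻¹) 0 hξ]
  have hξ' : (ξ:ℂ) ≠ 0 := Complex.ofReal_ne_zero.2 hξ.ne'
  rw [zero_mul, Complex.real_smul]
  push_cast
  field_simp

lemma scale_valR (F : ℝ → ℝ) {ξ : ℝ} (hξ : 0 < ξ) :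
    ∫ a in Set.Ioi (0:ℝ), F (a * ξ) * a⁻¹ = ∫ u in Set.Ioi (0:ℝ), F u * u⁻¹ := by
  have h1 : ∀ a ∈ Set.Ioi (0:ℝ), F (a * ξ) * a⁻¹
      = ξ * ((fun u => F u * u⁻¹) (a * ξ)) := by
    intro a ha
    have hξ0 : ξ ≠ 0 := hξ.ne'
    have ha0 : a ≠ 0 := (ne_of_gt ha)
    field_simp
  rw [setIntegral_congr_fun measurableSet_Ioi h1, integral_const_mul,
    integral_comp_mul_right_Ioi (fun u => F u * u⁻¹) 0 hξ]
  rw [zero_mul, smul_eq_mul]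
  field_simp

lemma scale_intC (F : ℝ → ℂ) {ξ : ℝ} (hξ : 0 < ξ)
    (h : IntegrableOn (fun u => F u * (u:ℂ)⁻¹) (Set.Ioi (0:ℝ))) :
    IntegrableOn (fun a => F (a * ξ) * (a:ℂ)⁻¹) (Set.Ioi (0:ℝ)) := by
  have h2 : IntegrableOn (fun a => (fun u => F u * (u:ℂ)⁻¹) (a * ξ)) (Set.Ioi (0:ℝ)) := by
    have := (integrableOn_Ioi_comp_mul_right_iff (fun u => F u * (u:ℂ)⁻¹) 0 hξ).2
    simpa using this (by simpa using h)
  refine (h2.const_mul (ξ:ℂ)).congr ?_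
  filter_upwards [ae_restrict_mem measurableSet_Ioi] with a ha
  have ha' : (a:ℂ) ≠ 0 := Complex.ofReal_ne_zero.2 (ne_of_gt ha)
  have hξ' : (ξ:ℂ) ≠ 0 := Complex.ofReal_ne_zero.2 hξ.ne'
  push_cast
  field_simp

/-- Recovery of a real-valued signal from its adaptive CWT with an analytic wavelet:
`x(b) = Re( (2/c_ψ(b)) ∫₀^∞ W̃(a)/a da )`. -/
theorem adaptive_cwt_recovery_real
    (b μ σb : ℝ) (hμ : 0 < μ) (hσb : 0 < σb)
    (g : ℝ → ℂ) (hg : Integrable g)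
    (ghat : ℝ → ℂ)
    (hghat : ∀ ξ : ℝ, ghat ξ = ∫ t : ℝ, g t * Complex.exp (-2 * π * Complex.I * ξ * t))
    (ψhat : ℝ → ℂ)
    (hψhat : ∀ ξ : ℝ, ψhat ξ = starRingEnd ℂ (ghat (σb * (μ - ξ))))
    (X : ℝ → ℂ) (hX : Integrable X)
    (hXsym : ∀ᵐ ξ : ℝ, starRingEnd ℂ (X ξ) = X (-ξ))
    (xb : ℂ)
    (hxb : xb = ∫ ξ : ℝ, X ξ * Complex.exp (2 * π * Complex.I * b * ξ))
    (hadm : IntegrableOn (fun ξ : ℝ => ‖ψhat ξ‖ / ξ) (Set.Ioi (0 : ℝ)))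
    (cψ : ℂ)
    (hcψ : cψ = ∫ ξ in Set.Ioi (0 : ℝ), starRingEnd ℂ (ψhat ξ) * (ξ : ℂ)⁻¹)
    (hcψ0 : cψ ≠ 0)
    (W : ℝ → ℂ)
    (hW : ∀ a : ℝ, W a =
      ∫ ξ in Set.Ioi (0 : ℝ), X ξ * starRingEnd ℂ (ψhat (a * ξ)) * Complex.exp (2 * π * Complex.I * b * ξ)) :
    xb = ((2 / cψ * ∫ a in Set.Ioi (0 : ℝ), W a * (a : ℂ)⁻¹).re : ℝ) := by
  -- the exponential factor
  set e : ℝ → ℂ := fun ξ => Complex.exp (2 * π * Complex.I * b * ξ) with he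
  have hnorme : ∀ ξ : ℝ, ‖e ξ‖ = 1 := by
    intro ξ
    rw [he]
    simp only [Complex.norm_exp]
    norm_num [Complex.mul_re, Complex.mul_im]
  -- ghat is the Fourier transform of g, hence continuous
  have hghat' : ghat = FourierTransform.fourier g := by
    funext ξ
    rw [hghat, Real.fourier_real_eq_integral_exp_smul]
    refine integral_congr_ae (Filter.Eventually.of_forall fun t => ?_)
    show g t * Complex.exp (-2 * π * Complex.I * ξ * t)
      = Complex.exp (((-2 * π * t * ξ : ℝ) : ℂ) * Complex.I) • g t
    rw [smul_eq_mul, mul_comm]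
    congr 1
    push_cast
    ring
  have hgc : Continuous ghat := by
    rw [hghat']
    exact VectorFourier.fourierIntegral_continuous Real.continuous_fourierChar (L := innerₗ ℝ)
      (by exact continuous_inner) hg
  have hψc : Continuous ψhat := by
    have : Continuous fun ξ : ℝ => starRingEnd ℂ (ghat (σb * (μ - ξ))) :=
      Complex.continuous_conj.comp (hgc.comp (continuous_const.mul
        (continuous_const.sub continuous_id)))
    exact this.congr fun ξ => (hψhat ξ).symm
  -- integrability of conj ψhat(u)/u on (0,∞)
  have hmeasF : AEStronglyMeasurable (fun u : ℝ => starRingEnd ℂ (ψhat u) * (u:ℂ)⁻¹)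
      (volume.restrict (Set.Ioi (0:ℝ))) := by
    exact ((Complex.continuous_conj.comp hψc).aestronglyMeasurable.restrict).mul
      ((Complex.measurable_ofReal.inv).aestronglyMeasurable.restrict)
  have hF : IntegrableOn (fun u : ℝ => starRingEnd ℂ (ψhat u) * (u:ℂ)⁻¹) (Set.Ioi (0:ℝ)) := by
    refine (integrable_norm_iff hmeasF).1 ?_
    refine hadm.congr ?_
    filter_upwards [ae_restrict_mem measurableSet_Ioi] with u hu
    have hu0 : (0:ℝ) < u := hu
    rw [norm_mul, RCLike.norm_conj, norm_inv, Complex.norm_real, Real.norm_eq_abs,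
      abs_of_pos hu0, div_eq_mul_inv]
  -- integrability of X ξ * e ξ
  have hXe : Integrable (fun ξ : ℝ => X ξ * e ξ) := by
    have := hX.bdd_mul (Complex.continuous_exp.comp (by continuity) :
        Continuous e).aestronglyMeasurable (Filter.Eventually.of_forall fun ξ => le_of_eq (hnorme ξ))
    exact this.congr (Filter.Eventually.of_forall fun ξ => mul_comm _ _)
  set Iplus : ℂ := ∫ ξ in Set.Ioi (0:ℝ), X ξ * e ξ with hIplus
  -- the Fubini kernel
  set Q : ℝ × ℝ → ℂ := fun p =>
    (X p.1 * starRingEnd ℂ (ψhat (p.2 * p.1)) * e p.1) * ((p.2:ℂ))⁻¹ with hQ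
  have hmeasQ : AEStronglyMeasurable Q
      ((volume.restrict (Set.Ioi (0:ℝ))).prod (volume.restrict (Set.Ioi (0:ℝ)))) := by
    refine (((hX.1.restrict.comp_quasiMeasurePreserving
        Measure.quasiMeasurePreserving_fst).mul ?_).mul ?_).mul ?_
    · exact (Complex.continuous_conj.comp (hψc.comp
        (continuous_snd.mul continuous_fst))).aestronglyMeasurable
    · exact ((Complex.continuous_exp.comp (by continuity) : Continuous e).comp
        continuous_fst).aestronglyMeasurable
    · exact ((Complex.measurable_ofReal.comp measurable_snd).inv).aestronglyMeasurable
  set Ar : ℝ := ∫ u in Set.Ioi (0:ℝ), ‖ψhat u‖ * u⁻¹ with hAr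
  have hQint : Integrable Q
      ((volume.restrict (Set.Ioi (0:ℝ))).prod (volume.restrict (Set.Ioi (0:ℝ)))) := by
    refine (integrable_prod_iff hmeasQ).2 ⟨?_, ?_⟩
    · filter_upwards [ae_restrict_mem measurableSet_Ioi] with ξ hξ
      have hξ0 : (0:ℝ) < ξ := hξ
      refine ((scale_intC (fun u => starRingEnd ℂ (ψhat u)) hξ0 hF).const_mul
        (X ξ * e ξ)).congr (Filter.Eventually.of_forall fun a => ?_)
      simp only [hQ]
      ring
    · have key : ∀ ξ ∈ Set.Ioi (0:ℝ),
          (∫ a in Set.Ioi (0:ℝ), ‖Q (ξ, a)‖) = ‖X ξ‖ * Ar := by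
        intro ξ hξ
        have hξ0 : (0:ℝ) < ξ := hξ
        have h2 : ∀ a ∈ Set.Ioi (0:ℝ), ‖Q (ξ, a)‖
            = ‖X ξ‖ * ((fun u => ‖ψhat u‖) (a * ξ) * a⁻¹) := by
          intro a ha
          have ha0 : (0:ℝ) < a := ha
          simp only [hQ, norm_mul, RCLike.norm_conj, norm_inv, Complex.norm_real,
            Real.norm_eq_abs, abs_of_pos ha0, hnorme, mul_one]
          ring
        rw [setIntegral_congr_fun measurableSet_Ioi h2, integral_const_mul,
          scale_valR (fun u => ‖ψhat u‖) hξ0]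
      refine ((hX.norm.mul_const Ar).restrict.congr ?_)
      filter_upwards [ae_restrict_mem measurableSet_Ioi] with ξ hξ
      exact (key ξ hξ).symm
  -- Fubini
  have hsw : (∫ ξ in Set.Ioi (0:ℝ), ∫ a in Set.Ioi (0:ℝ), Q (ξ, a))
      = ∫ a in Set.Ioi (0:ℝ), ∫ ξ in Set.Ioi (0:ℝ), Q (ξ, a) :=
    integral_integral_swap hQint
  -- evaluate the left side
  have hL : (∫ ξ in Set.Ioi (0:ℝ), ∫ a in Set.Ioi (0:ℝ), Q (ξ, a)) = Iplus * cψ := by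
    have h3 : ∀ ξ ∈ Set.Ioi (0:ℝ),
        (∫ a in Set.Ioi (0:ℝ), Q (ξ, a)) = (X ξ * e ξ) * cψ := by
      intro ξ hξ
      have hξ0 : (0:ℝ) < ξ := hξ
      have h4 : ∀ a : ℝ, Q (ξ, a)
          = (X ξ * e ξ) * ((fun u => starRingEnd ℂ (ψhat u)) (a * ξ) * (a:ℂ)⁻¹) := by
        intro a
        simp only [hQ]
        ring
      rw [integral_congr_ae (Filter.Eventually.of_forall h4), integral_const_mul,
        scale_valC (fun u => starRingEnd ℂ (ψhat u)) hξ0, ← hcψ]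
    rw [setIntegral_congr_fun measurableSet_Ioi h3, integral_mul_const]
  -- evaluate the right side
  have hR : (∫ a in Set.Ioi (0:ℝ), ∫ ξ in Set.Ioi (0:ℝ), Q (ξ, a))
      = ∫ a in Set.Ioi (0:ℝ), W a * (a:ℂ)⁻¹ := by
    refine integral_congr_ae (Filter.Eventually.of_forall fun a => ?_)
    show (∫ ξ in Set.Ioi (0:ℝ), Q (ξ, a)) = W a * (a:ℂ)⁻¹
    rw [hW a, ← integral_mul_const]
  have hWval : (∫ a in Set.Ioi (0:ℝ), W a * (a:ℂ)⁻¹) = Iplus * cψ := by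
    rw [← hR, ← hsw, hL]
  -- the negative-frequency part
  have hIminus : (∫ ξ in Set.Iic (0:ℝ), X ξ * e ξ) = starRingEnd ℂ Iplus := by
    have h5 := integral_comp_neg_Ioi (0:ℝ) (fun ξ => X ξ * e ξ)
    rw [neg_zero] at h5
    rw [← h5, hIplus, ← integral_conj]
    refine integral_congr_ae ?_
    filter_upwards [ae_restrict_of_ae hXsym] with x hx
    simp only [he, map_mul, ← hx]
    congr 2
    rw [← Complex.exp_conj]
    congr 1
    simp only [map_mul, Complex.conj_I, Complex.conj_ofReal, map_ofNat]
    push_cast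
    ring
  have hxb2 : xb = starRingEnd ℂ Iplus + Iplus := by
    rw [hxb, ← intervalIntegral.integral_Iic_add_Ioi (hXe.integrableOn) (hXe.integrableOn), hIminus, hIplus]
  -- final computation
  have hfinal : 2 / cψ * (∫ a in Set.Ioi (0:ℝ), W a * (a:ℂ)⁻¹) = 2 * Iplus := by
    rw [hWval]
    field_simp
  rw [hxb2, hfinal]
  rw [add_comm, Complex.add_conj]
  push_cast
  simp [Complex.mul_re]
end

section
/- Let A ∈ ℂ, c, r, b, μ ∈ ℝ and a, σ > 0, and let s(t) = A e^{2πi(ct + (r/2)t²)} be a linear chirp. Then the CWT of s with the simplified Morlet wavelet, W_s(a, b) = ∫_ℝ s(b + aτ) (1/(σ√(2π))) e^{−τ²/(2σ²)} e^{−2πiμτ} dτ, equals (A / √(1 − 2πiσ²a²r)) · e^{2πi(cb + (r/2)b²)} · exp( −(2π²(aσ)² / (1 + (2πr a²σ²)²)) · (c + rb − μ/a)² · (1 + 2πi a²σ² r) ), where the square root is the principal complex square root. -/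
open Real

set_option maxHeartbeats 1000000 in
/-- CWT of a linear chirp with the simplified Morlet wavelet (Proposition 2). -/
theorem cwt_linear_chirp_morlet
    (A : ℂ) (c r b μ : ℝ) (a σ : ℝ) (ha : 0 < a) (hσ : 0 < σ)
    (s : ℝ → ℂ)
    (hs : ∀ t : ℝ, s t = A * Complex.exp (2 * π * Complex.I * (c * t + r / 2 * t ^ 2))) :
    (∫ τ : ℝ, s (b + a * τ) * ((1 / (σ * Real.sqrt (2 * π)) : ℝ) : ℂ) *
        Complex.exp (-(τ : ℂ) ^ 2 / (2 * (σ : ℂ) ^ 2)) * Complex.exp (-2 * π * Complex.I * μ * τ)) =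
      A / (1 - 2 * π * Complex.I * σ ^ 2 * a ^ 2 * r) ^ (1 / 2 : ℂ) *
        Complex.exp (2 * π * Complex.I * (c * b + r / 2 * b ^ 2)) *
        Complex.exp (-(((2 * π ^ 2 * (a * σ) ^ 2 / (1 + (2 * π * r * a ^ 2 * σ ^ 2) ^ 2) : ℝ)) : ℂ) *
          ((c : ℂ) + r * b - μ / a) ^ 2 * (1 + 2 * π * Complex.I * a ^ 2 * σ ^ 2 * r)) := by
  have hσ' : (σ : ℂ) ≠ 0 := Complex.ofReal_ne_zero.mpr hσ.ne'
  have ha' : (a : ℂ) ≠ 0 := Complex.ofReal_ne_zero.mpr ha.ne'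
  have hπ : (0:ℝ) < π := Real.pi_pos
  set B : ℂ := ((-(1 / (2 * σ ^ 2)) : ℝ) : ℂ) + ((π * r * a ^ 2 : ℝ) : ℂ) * Complex.I with hB
  set C : ℂ := (↑(2 * π * (c * a + r * b * a - μ)) : ℂ) * Complex.I with hC
  set D : ℂ := 2 * ↑π * Complex.I * (↑c * ↑b + ↑r / 2 * ↑b ^ 2) with hD
  set w : ℂ := 1 - 2 * ↑π * Complex.I * ↑σ ^ 2 * ↑a ^ 2 * ↑r with hw
  have hBre : B.re < 0 := by
    have : (0:ℝ) < 1 / (2 * σ ^ 2) := by positivity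
    simp only [hB, Complex.add_re, Complex.ofReal_re, Complex.mul_re, Complex.I_re,
      Complex.ofReal_im, Complex.I_im, mul_zero, zero_mul, mul_one, sub_zero, add_zero]
    linarith
  have hB' : B ≠ 0 := fun h => by simp [h] at hBre
  have hnB : -B ≠ 0 := neg_ne_zero.mpr hB'
  have hwre : w.re = 1 := by
    simp [hw, ← Complex.ofReal_pow, Complex.sub_re, Complex.mul_re, Complex.mul_im,
      Complex.I_re, Complex.I_im]
  have hw' : w ≠ 0 := fun h => by simp [h] at hwre
  -- Step 1: rewrite the integrand as a Gaussian
  have h1 : ∀ τ : ℝ, s (b + a * τ) * ((1 / (σ * Real.sqrt (2 * π)) : ℝ) : ℂ) *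
        Complex.exp (-(τ : ℂ) ^ 2 / (2 * (σ : ℂ) ^ 2)) * Complex.exp (-2 * π * Complex.I * μ * τ)
      = (A * ((1 / (σ * Real.sqrt (2 * π)) : ℝ) : ℂ)) * Complex.exp (B * τ ^ 2 + C * τ + D) := by
    intro τ
    rw [hs]
    have hexp : Complex.exp (B * τ ^ 2 + C * τ + D) =
        Complex.exp (2 * π * Complex.I * (↑c * ↑(b + a * τ) + ↑r / 2 * (↑(b + a * τ):ℂ) ^ 2)) *
          Complex.exp (-(τ : ℂ) ^ 2 / (2 * (σ : ℂ) ^ 2)) *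
          Complex.exp (-2 * π * Complex.I * μ * τ) := by
      rw [← Complex.exp_add, ← Complex.exp_add]
      congr 1
      simp only [hB, hC, hD]
      push_cast
      field_simp
      ring
    rw [hexp]
    ring
  rw [MeasureTheory.integral_congr_ae (Filter.Eventually.of_forall h1),
    MeasureTheory.integral_const_mul, integral_cexp_quadratic hBre]
  -- normalize the exponent 1/2 to 2⁻¹
  rw [show (1/2 : ℂ) = (2⁻¹ : ℂ) by norm_num]
  -- Step 2: square-root prefactor
  have h2 : (w ^ (2⁻¹ : ℂ)) ^ (2 : ℕ) = w := Complex.cpow_ofNat_inv_pow w 2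
  have hwhalf : w ^ (2⁻¹ : ℂ) ≠ 0 := by
    intro h
    apply hw'
    rw [← h2, h]
    norm_num
  have hwhalfre : 0 < (w ^ (2⁻¹ : ℂ)).re := by
    rw [Complex.cpow_inv_two_re, hwre]
    have : (0:ℝ) < (‖w‖ + 1) / 2 := by positivity
    exact Real.sqrt_pos.mpr this
  have hs2π : (0:ℝ) < σ * Real.sqrt (2 * π) := by positivity
  have hs2π' : ((σ * Real.sqrt (2 * π) : ℝ) : ℂ) ≠ 0 := Complex.ofReal_ne_zero.mpr hs2π.ne'
  have hure : 0 < ((↑(σ * Real.sqrt (2 * π)) : ℂ) / w ^ (2⁻¹ : ℂ)).re := by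
    rw [Complex.div_re]
    simp only [Complex.ofReal_re, Complex.ofReal_im, zero_mul, zero_div, add_zero]
    have hns : 0 < Complex.normSq (w ^ (2⁻¹ : ℂ)) := Complex.normSq_pos.mpr hwhalf
    positivity
  have key : (↑π / -B) ^ (2⁻¹ : ℂ) = (↑(σ * Real.sqrt (2 * π)) : ℂ) / w ^ (2⁻¹ : ℂ) := by
    have hsq : ((↑(σ * Real.sqrt (2 * π)) : ℂ) / w ^ (2⁻¹ : ℂ)) ^ (2 : ℕ) = ↑π / -B := by
      rw [div_pow, h2]
      have hrs : ((↑(σ * Real.sqrt (2 * π)) : ℂ)) ^ (2:ℕ) = ((σ ^ 2 * (2 * π) : ℝ) : ℂ) := by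
        rw [← Complex.ofReal_pow]
        norm_cast
        rw [mul_pow, Real.sq_sqrt (by positivity : (0:ℝ) ≤ 2 * π)]
      rw [hrs]
      rw [div_eq_div_iff hw' hnB]
      simp only [hB, hw]
      push_cast
      field_simp
      ring
    rw [← hsq, Complex.sq_cpow_two_inv hure]
  rw [key]
  -- Step 3: the exponent
  have hden : (0:ℝ) < 1 + (2 * π * r * a ^ 2 * σ ^ 2) ^ 2 := by positivity
  have hdenC : (1 : ℂ) + (2 * (π:ℂ) * r * a ^ 2 * σ ^ 2) ^ 2 ≠ 0 := by
    intro h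
    have h0 : ((1 + (2 * π * r * a ^ 2 * σ ^ 2) ^ 2 : ℝ) : ℂ) = 0 := by
      push_cast
      linear_combination h
    exact hden.ne' (by exact_mod_cast h0)
  have hexp2 : D - C ^ 2 / (4 * B) = D +
      (-(((2 * π ^ 2 * (a * σ) ^ 2 / (1 + (2 * π * r * a ^ 2 * σ ^ 2) ^ 2) : ℝ)) : ℂ) *
        ((c : ℂ) + r * b - μ / a) ^ 2 * (1 + 2 * π * Complex.I * a ^ 2 * σ ^ 2 * r)) := by
    rw [sub_eq_add_neg]
    congr 1
    have h4 : (-(1 / (2 * (σ:ℂ) ^ 2)) + ↑π * ↑r * ↑a ^ 2 * Complex.I) ≠ 0 := by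
      have hEq : (-(1 / (2 * (σ:ℂ) ^ 2)) + ↑π * ↑r * ↑a ^ 2 * Complex.I) = B := by
        rw [hB]; push_cast; ring
      rw [hEq]; exact hB'
    have h4' : (4:ℂ) * (-(1 / (2 * (σ:ℂ) ^ 2)) + ↑π * ↑r * ↑a ^ 2 * Complex.I) ≠ 0 :=
      mul_ne_zero (by norm_num) h4
    simp only [hB, hC]
    push_cast
    rw [neg_div', div_eq_iff h4']
    field_simp
    ring_nf
    simp only [Complex.I_sq]
    have hdenC' : (1 + (a:ℂ) ^ 4 * (r:ℂ) ^ 2 * (π:ℂ) ^ 2 * (σ:ℂ) ^ 4 * 4) ≠ 0 := by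
      convert hdenC using 1; ring
    linear_combination (-4 * ((a:ℂ) * c + a * r * b - μ) ^ 2) * mul_inv_cancel₀ hdenC'
  rw [hexp2, Complex.exp_add]
  have hk : ((1 / (σ * Real.sqrt (2 * π)) : ℝ) : ℂ) = (↑(σ * Real.sqrt (2 * π)) : ℂ)⁻¹ := by
    push_cast
    rw [one_div]
  rw [hk]
  generalize Complex.exp D = X
  generalize Complex.exp _ = Y
  have hr2 : ((Real.sqrt 2 : ℝ) : ℂ) ≠ 0 :=
    Complex.ofReal_ne_zero.mpr (Real.sqrt_pos.mpr (by norm_num)).ne'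
  have hrπ : ((Real.sqrt π : ℝ) : ℂ) ≠ 0 :=
    Complex.ofReal_ne_zero.mpr (Real.sqrt_pos.mpr hπ).ne'
  have hm : ((σ:ℂ) * (↑(Real.sqrt 2) * ↑(Real.sqrt π)) : ℂ) ≠ 0 :=
    mul_ne_zero hσ' (mul_ne_zero hr2 hrπ)
  field_simp
end

section
/- Let A ∈ ℂ, c, r, b, μ ∈ ℝ and a, σ > 0, and let s(t) = A e^{2πi(ct + (r/2)t²)}. Then the modulus of the Morlet-wavelet CWT W_s(a, b) = ∫_ℝ s(b + aτ) (1/(σ√(2π))) e^{−τ²/(2σ²)} e^{−2πiμτ} dτ satisfies |W_s(a, b)| = |A| · (1 + (2πσ²a²r)²)^{−1/4} · exp( −(2π²(aσ)² / (1 + (2πr a²σ²)²)) · (c + rb − μ/a)² ). -/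
open Real

set_option maxHeartbeats 1000000 in
/-- Modulus of the Morlet-wavelet CWT of a linear chirp. -/
theorem cwt_linear_chirp_morlet_abs
    (A : ℂ) (c r b μ : ℝ) (a σ : ℝ) (ha : 0 < a) (hσ : 0 < σ)
    (s : ℝ → ℂ)
    (hs : ∀ t : ℝ, s t = A * Complex.exp (2 * π * Complex.I * (c * t + r / 2 * t ^ 2))) :
    ‖∫ τ : ℝ, s (b + a * τ) * ((1 / (σ * Real.sqrt (2 * π)) : ℝ) : ℂ) *
        Complex.exp (-(τ : ℂ) ^ 2 / (2 * (σ : ℂ) ^ 2)) * Complex.exp (-2 * π * Complex.I * μ * τ)‖ =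
      ‖A‖ * (1 + (2 * π * σ ^ 2 * a ^ 2 * r) ^ 2) ^ (-(1 / 4) : ℝ) *
        Real.exp (-(2 * π ^ 2 * (a * σ) ^ 2 / (1 + (2 * π * r * a ^ 2 * σ ^ 2) ^ 2)) *
          (c + r * b - μ / a) ^ 2) := by
  have hπ := Real.pi_pos
  have hσ' : (σ:ℂ) ≠ 0 := Complex.ofReal_ne_zero.mpr hσ.ne'
  have ha' : (a:ℝ) ≠ 0 := ha.ne'
  set B : ℂ := ((-(1/(2*σ^2)) : ℝ) : ℂ) + ((π*r*a^2 : ℝ):ℂ)*Complex.I with hB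
  set C : ℂ := ((2*π*(a*c + a*r*b - μ) : ℝ):ℂ)*Complex.I with hC
  set d : ℂ := ((2*π*(c*b + r/2*b^2) : ℝ):ℂ)*Complex.I with hd
  have hBre : B.re < 0 := by
    have : B.re = -(1/(2*σ^2)) := by
      simp only [hB, Complex.add_re, Complex.ofReal_re, Complex.mul_re, Complex.I_re,
        Complex.I_im, Complex.ofReal_im, mul_zero, mul_one, zero_mul, sub_zero, add_zero]
    rw [this, neg_lt_zero]; positivity
  have hBne : B ≠ 0 := fun h => by simp [h] at hBre
  have h1 : ∀ τ:ℝ, s (b+a*τ) * ((1/(σ*Real.sqrt (2*π)) :ℝ):ℂ) *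
      Complex.exp (-(τ:ℂ)^2/(2*(σ:ℂ)^2)) * Complex.exp (-2*π*Complex.I*μ*τ)
      = (A * ((1/(σ*Real.sqrt (2*π)):ℝ):ℂ)) * Complex.exp (B*τ^2 + C*τ + d) := by
    intro τ
    rw [hs]
    rw [show A * Complex.exp (2 * ↑π * Complex.I * (↑c * ↑(b + a * τ) + ↑r / 2 * ↑(b + a * τ) ^ 2)) *
      ((1/(σ*Real.sqrt (2*π)) :ℝ):ℂ) * Complex.exp (-(τ:ℂ)^2/(2*(σ:ℂ)^2)) * Complex.exp (-2*π*Complex.I*μ*τ)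
      = (A * ((1/(σ*Real.sqrt (2*π)):ℝ):ℂ)) * (Complex.exp (2 * ↑π * Complex.I * (↑c * ↑(b + a * τ) + ↑r / 2 * ↑(b + a * τ) ^ 2)) * Complex.exp (-(τ:ℂ)^2/(2*(σ:ℂ)^2)) * Complex.exp (-2*π*Complex.I*μ*τ)) from by ring]
    rw [← Complex.exp_add, ← Complex.exp_add]
    congr 1
    have h2 : (-(τ:ℂ)^2/(2*(σ:ℂ)^2)) = ((-(1/(2*σ^2)) : ℝ) : ℂ) * τ^2 := by
      push_cast; field_simp
    rw [h2, hB, hC, hd]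
    push_cast
    ring
  simp_rw [h1]
  rw [MeasureTheory.integral_const_mul, integral_cexp_quadratic hBre C d]
  -- now norms
  rw [norm_mul, norm_mul, norm_mul]
  have hnormK : ‖((1/(σ*Real.sqrt (2*π)) :ℝ):ℂ)‖ = 1/(σ*Real.sqrt (2*π)) := by
    rw [Complex.norm_real, Real.norm_eq_abs, abs_of_pos]
    positivity
  -- norm of the cpow
  set k : ℝ := 2*π*σ^2*a^2*r with hk
  have hkpos : (0:ℝ) < 1 + k^2 := by positivity
  have hnormSqB : Complex.normSq B = (1/(2*σ^2))^2 * (1 + k^2) := by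
    rw [hB]
    rw [Complex.normSq_apply]
    simp only [Complex.add_re, Complex.ofReal_re, Complex.mul_re, Complex.I_re, Complex.I_im,
      Complex.ofReal_im, mul_zero, mul_one, zero_mul, sub_zero, add_zero,
      Complex.add_im, Complex.mul_im, zero_add]
    rw [hk]; field_simp
  have habsB : ‖B‖ = (1/(2*σ^2)) * Real.sqrt (1 + k^2) := by
    rw [Complex.norm_def, hnormSqB, Real.sqrt_mul (by positivity), Real.sqrt_sq (by positivity)]
  have habsdiv : ‖(π:ℂ) / -B‖ = (2*π*σ^2) * (1+k^2)^(-(1/2) : ℝ) := by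
    rw [norm_div, norm_neg, habsB, Complex.norm_real, Real.norm_eq_abs, abs_of_pos hπ,
      Real.rpow_neg hkpos.le, ← Real.sqrt_eq_rpow]
    field_simp
  have hcpow : ‖((π:ℂ) / -B) ^ (1/2 : ℂ)‖ = Real.sqrt (2*π) * σ * (1+k^2)^(-(1/4) : ℝ) := by
    rw [Complex.norm_cpow_of_ne_zero
      (div_ne_zero (Complex.ofReal_ne_zero.mpr hπ.ne') (neg_ne_zero.mpr hBne)),
      show ((1:ℂ)/2).re = (1/2 : ℝ) from by norm_num,
      show ((1:ℂ)/2).im = 0 from by norm_num, mul_zero, Real.exp_zero, div_one,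
      habsdiv, Real.mul_rpow (by positivity) (by positivity),
      ← Real.rpow_mul (by positivity : (0:ℝ) ≤ 1+k^2),
      show (2*π*σ^2 : ℝ)^((1:ℝ)/2) = Real.sqrt (2*π*σ^2) from (Real.sqrt_eq_rpow _).symm,
      show (2*π*σ^2 : ℝ) = (2*π)*σ^2 from by ring, Real.sqrt_mul (by positivity),
      Real.sqrt_sq hσ.le]
    norm_num
  -- exponent real part
  have hre : (d - C^2/(4*B)).re =
      -(2 * π ^ 2 * (a * σ) ^ 2 / (1 + (2 * π * r * a ^ 2 * σ ^ 2) ^ 2)) * (c + r * b - μ / a) ^ 2 := by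
    have hC2 : C^2 = ((-((2*π*(a*c + a*r*b - μ))^2) : ℝ) : ℂ) := by
      rw [hC, mul_pow, Complex.I_sq]; push_cast; ring
    rw [Complex.sub_re, hC2, Complex.div_re]
    have h4B : Complex.normSq (4*B) = 16 * ((1/(2*σ^2))^2 * (1 + k^2)) := by
      rw [show (4*B : ℂ) = ((4:ℝ):ℂ)*B from by push_cast; ring, Complex.normSq_mul, hnormSqB,
        Complex.normSq_ofReal]
      ring
    rw [h4B]
    simp only [hd, hB, Complex.mul_re, Complex.mul_im, Complex.add_re, Complex.add_im,
      Complex.ofReal_re, Complex.ofReal_im, Complex.I_re, Complex.I_im, Complex.re_ofNat,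
      Complex.im_ofNat, mul_zero, mul_one, zero_mul, sub_zero, add_zero, zero_add, zero_sub]
    have hden : (1 + (2 * π * r * a ^ 2 * σ ^ 2) ^ 2) ≠ 0 := by positivity
    rw [hk]
    field_simp
    ring
  rw [hnormK, hcpow]
  simp only [Complex.norm_exp]
  rw [hre]
  have hconst : (1/(σ*√(2*π))) * (√(2*π)*σ*(1+k^2)^(-(1/4):ℝ)) = (1+k^2)^(-(1/4):ℝ) := by
    field_simp
  rw [show ‖A‖ * (1 / (σ * √(2 * π))) * (√(2 * π) * σ * (1 + k ^ 2) ^ (-(1/4) : ℝ) *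
      rexp (-(2 * π ^ 2 * (a * σ) ^ 2 / (1 + (2 * π * r * a ^ 2 * σ ^ 2) ^ 2)) * (c + r * b - μ / a) ^ 2))
      = ‖A‖ * ((1/(σ*√(2*π))) * (√(2*π)*σ*(1+k^2)^(-(1/4):ℝ))) *
        rexp (-(2 * π ^ 2 * (a * σ) ^ 2 / (1 + (2 * π * r * a ^ 2 * σ ^ 2) ^ 2)) * (c + r * b - μ / a) ^ 2)
      from by ring, hconst]
end

section
/- Let g : ℝ → ℂ be continuously differentiable and compactly supported, let σ : ℝ → ℝ be differentiable with σ(b) > 0 for all b, let μ ∈ ℝ, and let s(t) = A e^{pt + (q/2)t²} e^{2πi(ct + (r/2)t²)} be an LFM signal with A ∈ ℂ, p, q, c, r ∈ ℝ. Then for every a ∈ ℝ and b ∈ ℝ, the partial derivative in b of the adaptive CWT W̃_s(a, b) exists and satisfies ∂_b W̃_s(a, b) = (p + qb + 2πi(c + rb)) W̃_s(a, b) + (q + 2πir) a σ(b) W̃^{g1}_s(a, b) − (σ'(b)/σ(b)) W̃_s(a, b) − (σ'(b)/σ(b)) W̃^{g2}_s(a, b). -/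
open Real MeasureTheory Metric

noncomputable section AdaptiveCWTAux

/-- kernel -/
def cwtKer (μ t : ℝ) : ℂ := Complex.exp (-2 * ↑Real.pi * Complex.I * ↑μ * ↑t)

/-- parametric integrand -/
def cwtF (s g : ℝ → ℂ) (μ a : ℝ) (z : ℝ × ℝ) (t : ℝ) : ℂ :=
  s (z.1 + a * t) * ((1 / (z.2 : ℂ)) * g (t / z.2)) * cwtKer μ t

/-- partial derivative in first variable -/
def cwtD1 (s g : ℝ → ℂ) (Lc : ℝ → ℂ) (μ a : ℝ) (z : ℝ × ℝ) (t : ℝ) : ℂ :=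
  (Lc (z.1 + a * t) * s (z.1 + a * t)) * ((1 / (z.2 : ℂ)) * g (t / z.2)) * cwtKer μ t

/-- partial derivative in second variable -/
def cwtD2 (s g : ℝ → ℂ) (μ a : ℝ) (z : ℝ × ℝ) (t : ℝ) : ℂ :=
  s (z.1 + a * t) *
    ((-(1 / (z.2 : ℂ) ^ 2)) * g (t / z.2)
      + (1 / (z.2 : ℂ)) * (((-(t : ℂ)) / (z.2 : ℂ) ^ 2) * deriv g (t / z.2))) * cwtKer μ t

/-- full Fréchet derivative -/
def cwtFD (s g : ℝ → ℂ) (Lc : ℝ → ℂ) (μ a : ℝ) (z : ℝ × ℝ) (t : ℝ) : ℝ × ℝ →L[ℝ] ℂ :=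
  (ContinuousLinearMap.fst ℝ ℝ ℝ).smulRight (cwtD1 s g Lc μ a z t)
    + (ContinuousLinearMap.snd ℝ ℝ ℝ).smulRight (cwtD2 s g μ a z t)

theorem cwtFD_norm_le (s g : ℝ → ℂ) (Lc : ℝ → ℂ) (μ a : ℝ) (z : ℝ × ℝ) (t : ℝ) :
    ‖cwtFD s g Lc μ a z t‖ ≤ ‖cwtD1 s g Lc μ a z t‖ + ‖cwtD2 s g μ a z t‖ := by
  apply ContinuousLinearMap.opNorm_le_bound _
    (by positivity)
  intro v
  rw [cwtFD]
  simp only [ContinuousLinearMap.add_apply, ContinuousLinearMap.smulRight_apply,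
    ContinuousLinearMap.coe_fst', ContinuousLinearMap.coe_snd']
  calc ‖v.1 • cwtD1 s g Lc μ a z t + v.2 • cwtD2 s g μ a z t‖
      ≤ ‖v.1 • cwtD1 s g Lc μ a z t‖ + ‖v.2 • cwtD2 s g μ a z t‖ := norm_add_le _ _
    _ = ‖v.1‖ * ‖cwtD1 s g Lc μ a z t‖ + ‖v.2‖ * ‖cwtD2 s g μ a z t‖ := by
        rw [norm_smul, norm_smul]
    _ ≤ ‖v‖ * ‖cwtD1 s g Lc μ a z t‖ + ‖v‖ * ‖cwtD2 s g μ a z t‖ := by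
        gcongr
        · exact norm_fst_le v
        · exact norm_snd_le v
    _ = (‖cwtD1 s g Lc μ a z t‖ + ‖cwtD2 s g μ a z t‖) * ‖v‖ := by ring

theorem cwtFD_zero : (ContinuousLinearMap.fst ℝ ℝ ℝ).smulRight (0 : ℂ)
    + (ContinuousLinearMap.snd ℝ ℝ ℝ).smulRight (0 : ℂ) = 0 := by
  refine ContinuousLinearMap.ext fun v => ?_
  simp

end AdaptiveCWTAux

set_option maxHeartbeats 1000000

/-- Time derivative of the adaptive CWT of an LFM signal (key identity in the proof of
Theorem 2): `∂_b W̃_s = (p+qb+2πi(c+rb)) W̃_s + (q+2πir) a σ(b) W̃^{g1}_s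
− (σ'(b)/σ(b)) W̃_s − (σ'(b)/σ(b)) W̃^{g2}_s`. -/
theorem adaptive_cwt_time_derivative_lfm
    (g : ℝ → ℂ) (hg : ContDiff ℝ 1 g) (hgsupp : HasCompactSupport g)
    (σ : ℝ → ℝ) (hσdiff : Differentiable ℝ σ) (hσpos : ∀ b : ℝ, 0 < σ b)
    (μ : ℝ) (A : ℂ) (p q c r : ℝ)
    (s : ℝ → ℂ)
    (hs : ∀ t : ℝ, s t = A * Complex.exp (((p * t + q / 2 * t ^ 2 : ℝ) : ℂ)) *
      Complex.exp (2 * π * Complex.I * (c * t + r / 2 * t ^ 2)))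
    (W W1 W2 : ℝ → ℝ → ℂ)
    (hW : ∀ a b : ℝ, W a b = ∫ t : ℝ, s (b + a * t) * (1 / (σ b : ℂ)) * g (t / σ b) *
      Complex.exp (-2 * π * Complex.I * μ * t))
    (hW1 : ∀ a b : ℝ, W1 a b = ∫ t : ℝ, s (b + a * t) * ((t : ℂ) / (σ b : ℂ) ^ 2) * g (t / σ b) *
      Complex.exp (-2 * π * Complex.I * μ * t))
    (hW2 : ∀ a b : ℝ, W2 a b = ∫ t : ℝ, s (b + a * t) * ((t : ℂ) / (σ b : ℂ) ^ 2) *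
      deriv g (t / σ b) * Complex.exp (-2 * π * Complex.I * μ * t)) :
    ∀ a b : ℝ, HasDerivAt (fun b' => W a b')
      (((p : ℂ) + q * b + 2 * π * Complex.I * ((c : ℂ) + r * b)) * W a b
        + ((q : ℂ) + 2 * π * Complex.I * r) * a * (σ b : ℂ) * W1 a b
        - (((deriv σ b : ℝ) : ℂ) / (σ b : ℂ)) * W a b
        - (((deriv σ b : ℝ) : ℂ) / (σ b : ℂ)) * W2 a b) b := by
  -- normalize the form of s
  have hse : s = fun t : ℝ => A * Complex.exp (((p * t + q / 2 * t ^ 2 : ℝ) : ℂ)) *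
      Complex.exp (2 * (π : ℂ) * Complex.I * (((c * t + r / 2 * t ^ 2 : ℝ) : ℂ))) := by
    funext t
    rw [hs t]
    push_cast
    ring_nf
  subst hse
  set Lc : ℝ → ℂ := fun x : ℝ =>
    (p : ℂ) + q * x + 2 * π * Complex.I * ((c : ℂ) + r * x) with hLc
  set sf : ℝ → ℂ := fun t : ℝ => A * Complex.exp (((p * t + q / 2 * t ^ 2 : ℝ) : ℂ)) *
      Complex.exp (2 * (π : ℂ) * Complex.I * (((c * t + r / 2 * t ^ 2 : ℝ) : ℂ))) with hsf
  -- derivative of s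
  have hre : ∀ (u v x : ℝ), HasDerivAt (fun t : ℝ => ((u * t + v / 2 * t ^ 2 : ℝ) : ℂ))
      (((u + v * x : ℝ) : ℂ)) x := by
    intro u v x
    apply HasDerivAt.ofReal_comp
    have h := ((hasDerivAt_id x).const_mul u).add ((hasDerivAt_pow 2 x).const_mul (v / 2))
    refine h.congr_deriv ?_
    push_cast
    ring
  have hsd : ∀ x : ℝ, HasDerivAt sf (Lc x * sf x) x := by
    intro x
    have h1 : HasDerivAt (fun t : ℝ => Complex.exp (((p * t + q / 2 * t ^ 2 : ℝ) : ℂ)))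
        (Complex.exp (((p * x + q / 2 * x ^ 2 : ℝ) : ℂ)) * ((p + q * x : ℝ) : ℂ)) x :=
      (hre p q x).cexp
    have h2 : HasDerivAt
        (fun t : ℝ => Complex.exp (2 * (π : ℂ) * Complex.I * (((c * t + r / 2 * t ^ 2 : ℝ) : ℂ))))
        (Complex.exp (2 * (π : ℂ) * Complex.I * (((c * x + r / 2 * x ^ 2 : ℝ) : ℂ)))
          * (2 * (π : ℂ) * Complex.I * ((c + r * x : ℝ) : ℂ))) x :=
      ((hre c r x).const_mul (2 * (π : ℂ) * Complex.I)).cexp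
    have h3 := (h1.const_mul A).mul h2
    refine h3.congr_deriv ?_
    simp only [hsf, hLc]
    push_cast
    ring
  have hscont : Continuous sf := by
    apply Continuous.mul
    apply Continuous.mul continuous_const
    · exact Complex.continuous_exp.comp (Complex.continuous_ofReal.comp (by fun_prop))
    · exact Complex.continuous_exp.comp (by fun_prop)
  have hgcont : Continuous g := hg.continuous
  have hg'cont : Continuous (deriv g) := hg.continuous_deriv le_rfl
  have hgd : ∀ y : ℝ, HasDerivAt g (deriv g y) y := fun y =>
    ((hg.differentiable one_ne_zero) y).hasDerivAt
  have hKer : Continuous (cwtKer μ) := by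
    unfold cwtKer
    exact Complex.continuous_exp.comp (by fun_prop)
  -- support radius
  obtain ⟨R₀, hR₀⟩ := hgsupp.isBounded.subset_closedBall 0
  set R : ℝ := max R₀ 1 with hRdef
  have hRpos : (0 : ℝ) < R := lt_of_lt_of_le one_pos (le_max_right _ _)
  have hgz : ∀ y : ℝ, R < |y| → g y = 0 ∧ deriv g y = 0 := by
    intro y hy
    have hnot : y ∉ tsupport g := by
      intro hmem
      have := hR₀ hmem
      rw [mem_closedBall, dist_zero_right, Real.norm_eq_abs] at this
      have : |y| ≤ R := this.trans (le_max_left _ _)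
      linarith
    constructor
    · exact image_eq_zero_of_notMem_tsupport hnot
    · by_contra h
      exact hnot (support_deriv_subset (by simpa using h))
  intro a b
  have hm : 0 < σ b := hσpos b
  have hmC : ((σ b : ℝ) : ℂ) ≠ 0 := by
    exact_mod_cast hm.ne'
  set T : ℝ := 2 * σ b * R with hT
  have hTpos : 0 < T := by positivity
  set z₀ : ℝ × ℝ := (b, σ b) with hz₀
  -- bounds on z.2 for z in the closed ball
  have hz2cb : ∀ z : ℝ × ℝ, z ∈ closedBall z₀ (σ b / 2) →
      σ b / 2 ≤ z.2 ∧ z.2 ≤ 2 * σ b := by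
    intro z hz
    rw [mem_closedBall] at hz
    have h2 : dist z.2 (σ b) ≤ σ b / 2 := by
      have : dist z.2 z₀.2 ≤ dist z z₀ := by
        rw [Prod.dist_eq]; exact le_max_right _ _
      calc dist z.2 (σ b) = dist z.2 z₀.2 := rfl
        _ ≤ dist z z₀ := this
        _ ≤ σ b / 2 := hz
    rw [Real.dist_eq, abs_le] at h2
    constructor <;> linarith [h2.1, h2.2]
  -- vanishing outside the compact set
  have hvan : ∀ z : ℝ × ℝ, z ∈ closedBall z₀ (σ b / 2) → ∀ t : ℝ, T < |t| →
      g (t / z.2) = 0 ∧ deriv g (t / z.2) = 0 := by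
    intro z hz t ht
    obtain ⟨h1, h2⟩ := hz2cb z hz
    have hz2pos : 0 < z.2 := lt_of_lt_of_le (by linarith) h1
    apply hgz
    rw [abs_div, abs_of_pos hz2pos]
    rw [lt_div_iff₀ hz2pos]
    calc R * z.2 ≤ R * (2 * σ b) := by
          apply mul_le_mul_of_nonneg_left h2 hRpos.le
      _ = T := by rw [hT]; ring
      _ < |t| := ht
  have hz₀cb : z₀ ∈ closedBall z₀ (σ b / 2) := mem_closedBall_self (by linarith)
  have hTout : ∀ t : ℝ, t ∉ closedBall (0 : ℝ) T → T < |t| := by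
    intro t ht
    rw [mem_closedBall, dist_zero_right, Real.norm_eq_abs, not_le] at ht
    exact ht
  -- pointwise differentiability in z
  have hdiff : ∀ (t : ℝ) (z : ℝ × ℝ), 0 < z.2 →
      HasFDerivAt (fun w => cwtF sf g μ a w t) (cwtFD sf g Lc μ a z t) z := by
    intro t z hz2
    have hzne : z.2 ≠ 0 := hz2.ne'
    have hzneC : ((z.2 : ℝ) : ℂ) ≠ 0 := by exact_mod_cast hzne
    -- first factor
    have hadd : HasFDerivAt (fun w : ℝ × ℝ => w.1 + a * t)
        (ContinuousLinearMap.fst ℝ ℝ ℝ) z := (hasFDerivAt_fst).add_const (a * t)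
    have hs1 := ((hsd (z.1 + a * t)).hasFDerivAt).comp z hadd
    -- second factor : one dimensional
    have hinv : HasDerivAt (fun x : ℝ => (1 / (x : ℂ))) (-(1 / (z.2 : ℂ) ^ 2)) z.2 := by
      have h0 : HasDerivAt (fun x : ℝ => ((x : ℝ) : ℂ)) 1 z.2 := by
        simpa using (hasDerivAt_id z.2).ofReal_comp
      have h := (hasDerivAt_const z.2 (1 : ℂ)).div h0 hzneC
      refine h.congr_deriv ?_
      ring
    have hdivt : HasDerivAt (fun x : ℝ => t / x) (-t / z.2 ^ 2) z.2 := by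
      have h := (hasDerivAt_const z.2 t).div (hasDerivAt_id z.2) hzne
      refine h.congr_deriv ?_
      simp only [id_eq]
      ring
    have hgt : HasDerivAt (fun x : ℝ => g (t / x)) ((-t / z.2 ^ 2) • deriv g (t / z.2)) z.2 :=
      HasDerivAt.scomp z.2 (hgd (t / z.2)) hdivt
    have hψ : HasDerivAt (fun x : ℝ => (1 / (x : ℂ)) * g (t / x))
        ((-(1 / (z.2 : ℂ) ^ 2)) * g (t / z.2)
          + (1 / (z.2 : ℂ)) * (((-(t : ℂ)) / (z.2 : ℂ) ^ 2) * deriv g (t / z.2))) z.2 := by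
      have h := hinv.mul hgt
      refine h.congr_deriv ?_
      rw [Complex.real_smul]
      push_cast
      ring
    have hs2 := (hψ.hasFDerivAt).comp z hasFDerivAt_snd
    have h3 := (hs1.mul hs2).mul_const (cwtKer μ t)
    have heq : (fun w : ℝ × ℝ => cwtF sf g μ a w t)
        = fun w : ℝ × ℝ => (sf (w.1 + a * t) * ((1 / (w.2 : ℂ)) * g (t / w.2))) * cwtKer μ t := by
      funext w; rw [cwtF]
    rw [heq]
    refine h3.congr_fderiv ?_
    rw [cwtFD, cwtD1, cwtD2]
    refine ContinuousLinearMap.ext fun v => ?_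
    simp only [ContinuousLinearMap.add_apply, ContinuousLinearMap.smulRight_apply,
      ContinuousLinearMap.coe_fst', ContinuousLinearMap.coe_snd',
      ContinuousLinearMap.smul_apply, ContinuousLinearMap.coe_smul', Pi.smul_apply,
      ContinuousLinearMap.coe_comp', Function.comp_apply, ContinuousLinearMap.one_apply,
      smul_eq_mul, Complex.real_smul, ContinuousLinearMap.toSpanSingleton_apply]
    push_cast
    ring
  -- continuity in t of the integrand and its pieces at any z with z.2 ≠ 0
  have hcontF : ∀ z : ℝ × ℝ, Continuous (fun t => cwtF sf g μ a z t) := by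
    intro z
    unfold cwtF
    apply Continuous.mul
    apply Continuous.mul
    · exact hscont.comp (by fun_prop)
    · exact Continuous.mul continuous_const (hgcont.comp (by fun_prop))
    · exact hKer
  have hcontD1 : Continuous (fun t => cwtD1 sf g Lc μ a z₀ t) := by
    unfold cwtD1
    apply Continuous.mul
    apply Continuous.mul
    · apply Continuous.mul
      · simp only [hLc]; fun_prop
      · exact hscont.comp (by fun_prop)
    · exact Continuous.mul continuous_const (hgcont.comp (by fun_prop))
    · exact hKer
  have hcontD2 : Continuous (fun t => cwtD2 sf g μ a z₀ t) := by
    unfold cwtD2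
    apply Continuous.mul
    apply Continuous.mul
    · exact hscont.comp (by fun_prop)
    · apply Continuous.add
      · exact Continuous.mul continuous_const (hgcont.comp (by fun_prop))
      · apply Continuous.mul continuous_const
        apply Continuous.mul
        · fun_prop
        · exact hg'cont.comp (by fun_prop)
    · exact hKer
  -- compact support statements
  have hsuppF : HasCompactSupport (fun t => cwtF sf g μ a z₀ t) := by
    apply HasCompactSupport.intro (isCompact_closedBall (0 : ℝ) T)
    intro t ht
    have := (hvan z₀ hz₀cb t (hTout t ht)).1
    simp [cwtF, this]
  have hsuppD1 : HasCompactSupport (fun t => cwtD1 sf g Lc μ a z₀ t) := by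
    apply HasCompactSupport.intro (isCompact_closedBall (0 : ℝ) T)
    intro t ht
    have := (hvan z₀ hz₀cb t (hTout t ht)).1
    simp [cwtD1, this]
  have hsuppD2 : HasCompactSupport (fun t => cwtD2 sf g μ a z₀ t) := by
    apply HasCompactSupport.intro (isCompact_closedBall (0 : ℝ) T)
    intro t ht
    obtain ⟨h1, h2⟩ := hvan z₀ hz₀cb t (hTout t ht)
    simp [cwtD2, h1, h2]
  have hintF : Integrable (fun t => cwtF sf g μ a z₀ t) :=
    (hcontF z₀).integrable_of_hasCompactSupport hsuppF
  -- bound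
  set K : Set ((ℝ × ℝ) × ℝ) := closedBall z₀ (σ b / 2) ×ˢ closedBall (0 : ℝ) T with hK
  have hKcompact : IsCompact K := (isCompact_closedBall _ _).prod (isCompact_closedBall _ _)
  have hKz2 : ∀ w ∈ K, w.1.2 ≠ 0 := by
    intro w hw
    have := (hz2cb w.1 hw.1).1
    have : 0 < w.1.2 := lt_of_lt_of_le (by linarith) this
    exact this.ne'
  have hKz2C : ∀ w ∈ K, ((w.1.2 : ℝ) : ℂ) ≠ 0 := by
    intro w hw
    exact_mod_cast hKz2 w hw
  have hcontOn1 : ContinuousOn (fun w : (ℝ × ℝ) × ℝ => cwtD1 sf g Lc μ a w.1 w.2) K := by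
    unfold cwtD1
    apply ContinuousOn.mul
    apply ContinuousOn.mul
    · apply Continuous.continuousOn
      apply Continuous.mul
      · simp only [hLc]; fun_prop
      · exact hscont.comp (by fun_prop)
    · apply ContinuousOn.mul
      · exact ContinuousOn.div continuousOn_const (by fun_prop) hKz2C
      · apply hgcont.comp_continuousOn
        exact ContinuousOn.div (by fun_prop) (by fun_prop) hKz2
    · exact (hKer.comp continuous_snd).continuousOn
  have hcontOn2 : ContinuousOn (fun w : (ℝ × ℝ) × ℝ => cwtD2 sf g μ a w.1 w.2) K := by
    unfold cwtD2
    apply ContinuousOn.mul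
    apply ContinuousOn.mul
    · exact (hscont.comp (by fun_prop)).continuousOn
    · apply ContinuousOn.add
      · apply ContinuousOn.mul
        · apply ContinuousOn.neg
          apply ContinuousOn.div continuousOn_const (by fun_prop)
          intro w hw
          exact pow_ne_zero 2 (hKz2C w hw)
        · apply hgcont.comp_continuousOn
          exact ContinuousOn.div (by fun_prop) (by fun_prop) hKz2
      · apply ContinuousOn.mul
        · exact ContinuousOn.div continuousOn_const (by fun_prop) hKz2C
        · apply ContinuousOn.mul
          · apply ContinuousOn.div (by fun_prop) (by fun_prop)
            intro w hw
            exact pow_ne_zero 2 (hKz2C w hw)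
          · apply hg'cont.comp_continuousOn
            exact ContinuousOn.div (by fun_prop) (by fun_prop) hKz2
    · exact (hKer.comp continuous_snd).continuousOn
  obtain ⟨C1, hC1⟩ := hKcompact.exists_bound_of_continuousOn hcontOn1
  obtain ⟨C2, hC2⟩ := hKcompact.exists_bound_of_continuousOn hcontOn2
  set bound : ℝ → ℝ := Set.indicator (closedBall (0 : ℝ) T) (fun _ => C1 + C2) with hbound
  have hbound_int : Integrable bound := by
    rw [hbound]
    rw [integrable_indicator_iff measurableSet_closedBall]
    exact integrableOn_const measure_closedBall_lt_top.ne
  -- main application of differentiation under the integral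
  have hmain : HasFDerivAt (fun z => ∫ t : ℝ, cwtF sf g μ a z t)
      (∫ t : ℝ, cwtFD sf g Lc μ a z₀ t) z₀ := by
    apply hasFDerivAt_integral_of_dominated_of_fderiv_le
      (F' := fun z t => cwtFD sf g Lc μ a z t) (bound := bound)
      (ball_mem_nhds z₀ (half_pos hm))
    · exact Filter.Eventually.of_forall fun z => (hcontF z).aestronglyMeasurable
    · exact hintF
    · apply Continuous.aestronglyMeasurable
      unfold cwtFD
      apply Continuous.add
      · exact ((ContinuousLinearMap.smulRightL ℝ (ℝ × ℝ) ℂ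
          (ContinuousLinearMap.fst ℝ ℝ ℝ)).continuous).comp hcontD1
      · exact ((ContinuousLinearMap.smulRightL ℝ (ℝ × ℝ) ℂ
          (ContinuousLinearMap.snd ℝ ℝ ℝ)).continuous).comp hcontD2
    · apply Filter.Eventually.of_forall
      intro t z hz
      have hzcb : z ∈ closedBall z₀ (σ b / 2) := ball_subset_closedBall hz
      by_cases ht : t ∈ closedBall (0 : ℝ) T
      · have hb : bound t = C1 + C2 := Set.indicator_of_mem ht _
        rw [hb]
        refine (cwtFD_norm_le sf g Lc μ a z t).trans ?_
        have h1 := hC1 (z, t) (Set.mk_mem_prod hzcb ht)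
        have h2 := hC2 (z, t) (Set.mk_mem_prod hzcb ht)
        exact add_le_add h1 h2
      · have hb : bound t = 0 := Set.indicator_of_notMem ht _
        rw [hb]
        obtain ⟨h1, h2⟩ := hvan z hzcb t (hTout t ht)
        have hD1 : cwtD1 sf g Lc μ a z t = 0 := by simp [cwtD1, h1]
        have hD2 : cwtD2 sf g μ a z t = 0 := by simp [cwtD2, h1, h2]
        rw [cwtFD, hD1, hD2, cwtFD_zero]
        simp
    · exact hbound_int
    · apply Filter.Eventually.of_forall
      intro t z hz
      apply hdiff
      have := (hz2cb z (ball_subset_closedBall hz)).1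
      linarith
  -- identify the function
  have hfun : (fun b' => W a b') = fun b' => ∫ t : ℝ, cwtF sf g μ a (b', σ b') t := by
    funext b'
    rw [hW a b']
    congr 1
    funext t
    rw [cwtF, cwtKer]
    ring
  -- compose with b' ↦ (b', σ b')
  have hγ : HasDerivAt (fun b' : ℝ => ((b' : ℝ), σ b')) ((1 : ℝ), deriv σ b) b :=
    (hasDerivAt_id b).prodMk (hσdiff b).hasDerivAt
  have hcomp := hmain.comp_hasDerivAt b hγ
  rw [hfun]
  have hfun2 : ((fun z => ∫ t : ℝ, cwtF sf g μ a z t) ∘ fun b' : ℝ => ((b' : ℝ), σ b'))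
      = fun b' : ℝ => ∫ t : ℝ, cwtF sf g μ a (b', σ b') t := rfl
  rw [hfun2] at hcomp
  refine hcomp.congr_deriv ?_
  symm
  -- compute the value of the derivative
  have hintFD : Integrable (fun t => cwtFD sf g Lc μ a z₀ t) := by
    apply Continuous.integrable_of_hasCompactSupport
    · unfold cwtFD
      apply Continuous.add
      · exact ((ContinuousLinearMap.smulRightL ℝ (ℝ × ℝ) ℂ
          (ContinuousLinearMap.fst ℝ ℝ ℝ)).continuous).comp hcontD1
      · exact ((ContinuousLinearMap.smulRightL ℝ (ℝ × ℝ) ℂ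
          (ContinuousLinearMap.snd ℝ ℝ ℝ)).continuous).comp hcontD2
    · apply HasCompactSupport.intro (isCompact_closedBall (0 : ℝ) T)
      intro t ht
      obtain ⟨h1, h2⟩ := hvan z₀ hz₀cb t (hTout t ht)
      have hD1 : cwtD1 sf g Lc μ a z₀ t = 0 := by simp [cwtD1, h1]
      have hD2 : cwtD2 sf g μ a z₀ t = 0 := by simp [cwtD2, h1, h2]
      rw [cwtFD, hD1, hD2, cwtFD_zero]
  rw [ContinuousLinearMap.integral_apply hintFD]
  rw [hW a b, hW1 a b, hW2 a b]
  -- the three basic integrands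
  set F0 : ℝ → ℂ := fun t => sf (b + a * t) * (1 / (σ b : ℂ)) * g (t / σ b) *
    Complex.exp (-2 * π * Complex.I * μ * t) with hF0
  set F1 : ℝ → ℂ := fun t => sf (b + a * t) * ((t : ℂ) / (σ b : ℂ) ^ 2) * g (t / σ b) *
    Complex.exp (-2 * π * Complex.I * μ * t) with hF1
  set F2 : ℝ → ℂ := fun t => sf (b + a * t) * ((t : ℂ) / (σ b : ℂ) ^ 2) *
    deriv g (t / σ b) * Complex.exp (-2 * π * Complex.I * μ * t) with hF2
  have hintF0 : Integrable F0 := by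
    apply Continuous.integrable_of_hasCompactSupport
    · rw [hF0]
      apply Continuous.mul
      apply Continuous.mul
      apply Continuous.mul
      · exact hscont.comp (by fun_prop)
      · fun_prop
      · exact hgcont.comp (by fun_prop)
      · exact Complex.continuous_exp.comp (by fun_prop)
    · apply HasCompactSupport.intro (isCompact_closedBall (0 : ℝ) T)
      intro t ht
      have := (hvan z₀ hz₀cb t (hTout t ht)).1
      simp only [hF0]
      simp [show g (t / σ b) = 0 from this]
  have hintF1 : Integrable F1 := by
    apply Continuous.integrable_of_hasCompactSupport
    · rw [hF1]
      apply Continuous.mul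
      apply Continuous.mul
      apply Continuous.mul
      · exact hscont.comp (by fun_prop)
      · fun_prop
      · exact hgcont.comp (by fun_prop)
      · exact Complex.continuous_exp.comp (by fun_prop)
    · apply HasCompactSupport.intro (isCompact_closedBall (0 : ℝ) T)
      intro t ht
      have := (hvan z₀ hz₀cb t (hTout t ht)).1
      simp only [hF1]
      simp [show g (t / σ b) = 0 from this]
  have hintF2 : Integrable F2 := by
    apply Continuous.integrable_of_hasCompactSupport
    · rw [hF2]
      apply Continuous.mul
      apply Continuous.mul
      apply Continuous.mul
      · exact hscont.comp (by fun_prop)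
      · fun_prop
      · exact hg'cont.comp (by fun_prop)
      · exact Complex.continuous_exp.comp (by fun_prop)
    · apply HasCompactSupport.intro (isCompact_closedBall (0 : ℝ) T)
      intro t ht
      have := (hvan z₀ hz₀cb t (hTout t ht)).2
      simp only [hF2]
      simp [show deriv g (t / σ b) = 0 from this]
  -- pointwise identity for the applied derivative
  have hpt : ∀ t : ℝ, (cwtFD sf g Lc μ a z₀ t) ((1 : ℝ), deriv σ b)
      = (Lc b - ((deriv σ b : ℝ) : ℂ) / (σ b : ℂ)) * F0 t
        + ((((q : ℂ) + 2 * π * Complex.I * r) * a * (σ b : ℂ)) * F1 t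
          + (-(((deriv σ b : ℝ) : ℂ) / (σ b : ℂ))) * F2 t) := by
    intro t
    rw [cwtFD, cwtD1, cwtD2, cwtKer]
    simp only [ContinuousLinearMap.add_apply, ContinuousLinearMap.smulRight_apply,
      ContinuousLinearMap.coe_fst', ContinuousLinearMap.coe_snd', Complex.real_smul,
      hF0, hF1, hF2, hLc, hz₀]
    push_cast
    field_simp [hmC]
    ring
  simp only [hpt]
  have hI0 : Integrable (fun t => (Lc b - ((deriv σ b : ℝ) : ℂ) / (σ b : ℂ)) * F0 t) volume :=
    hintF0.const_mul _
  have hI1 : Integrable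
      (fun t => (((q : ℂ) + 2 * π * Complex.I * r) * a * (σ b : ℂ)) * F1 t) volume :=
    hintF1.const_mul _
  have hI2 : Integrable (fun t => (-(((deriv σ b : ℝ) : ℂ) / (σ b : ℂ))) * F2 t) volume :=
    hintF2.const_mul _
  have hI12 : Integrable (fun t =>
      (((q : ℂ) + 2 * π * Complex.I * r) * a * (σ b : ℂ)) * F1 t
        + (-(((deriv σ b : ℝ) : ℂ) / (σ b : ℂ))) * F2 t) volume := hI1.add hI2
  simp only [integral_add hI0 hI12, integral_add hI1 hI2, MeasureTheory.integral_const_mul]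
  simp only [hLc]
  push_cast
  ring
end

section
/- Let g : ℝ → ℂ be twice continuously differentiable and compactly supported, let σ : ℝ → ℝ be differentiable with σ(b) > 0 for all b, let μ ∈ ℝ, and let x(t) = A e^{pt + (q/2)t²} e^{2πi(ct + (r/2)t²)} be an LFM signal with A ∈ ℂ, p, q, c, r ∈ ℝ. Let (a, b) with a > 0 be a point at which W̃_x(a, b) ≠ 0 and ∂_a ( a W̃^{g1}_x(a, b) / W̃_x(a, b) ) ≠ 0. Define R₀(a, b) = [ ∂_a ( ∂_b W̃_x(a,b) / W̃_x(a,b) ) + (σ'(b)/σ(b)) ∂_a ( W̃^{g2}_x(a,b) / W̃_x(a,b) ) ] / ∂_a ( a W̃^{g1}_x(a,b) / W̃_x(a,b) ), and the second-order adaptive phase transformation ω^{2adp}_x(a, b) = Re( ∂_b W̃_x(a,b) / (2πi W̃_x(a,b)) ) + (σ'(b)/σ(b)) Re( W̃^{g2}_x(a,b) / (2πi W̃_x(a,b)) ) − a Re( ( W̃^{g1}_x(a,b) / (2πi W̃_x(a,b)) ) R₀(a, b) ). Then ω^{2adp}_x(a, b) = c + r b, the instantaneous frequency of x at time b. -/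
open Real MeasureTheory Metric

noncomputable section


def lamAux (p q c r : ℝ) (s : ℝ) : ℂ :=
  ((p + q * s : ℝ) : ℂ) + 2 * π * Complex.I * ((c + r * s : ℝ) : ℂ)

lemma lamAux_continuous (p q c r : ℝ) : Continuous (lamAux p q c r) := by
  unfold lamAux; fun_prop

lemma lamAux_add (p q c r : ℝ) (b u : ℝ) :
    lamAux p q c r (b + u) = lamAux p q c r b + ((q : ℂ) + 2 * π * Complex.I * r) * u := by
  unfold lamAux; push_cast; ring

lemma chirp_hasDerivAt (A : ℂ) (p q c r : ℝ) (x : ℝ → ℂ)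
    (hx : ∀ t : ℝ, x t = A * Complex.exp (((p * t + q / 2 * t ^ 2 : ℝ) : ℂ)) *
      Complex.exp (2 * π * Complex.I * (c * t + r / 2 * t ^ 2)))
    (t : ℝ) : HasDerivAt x (lamAux p q c r t * x t) t := by
  have hEq : ∀ t : ℝ, x t = A * Complex.exp (((p * t + q / 2 * t ^ 2 : ℝ) : ℂ)) *
      Complex.exp (2 * π * Complex.I * (((c * t + r / 2 * t ^ 2 : ℝ)) : ℂ)) := by
    intro u; rw [hx u]; push_cast; ring_nf
  have h1r : HasDerivAt (fun t : ℝ => p * t + q / 2 * t ^ 2) (p + q * t) t := by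
    have := ((hasDerivAt_id t).const_mul p).add ((hasDerivAt_pow 2 t).const_mul (q / 2))
    convert this using 1 <;> first | rfl | ring
  have h2r : HasDerivAt (fun t : ℝ => c * t + r / 2 * t ^ 2) (c + r * t) t := by
    have := ((hasDerivAt_id t).const_mul c).add ((hasDerivAt_pow 2 t).const_mul (r / 2))
    convert this using 1 <;> first | rfl | ring
  have h1 : HasDerivAt (fun t : ℝ => (((p * t + q / 2 * t ^ 2 : ℝ) : ℂ)))
      (((p + q * t : ℝ) : ℂ)) t := by
    simpa [Function.comp_def] using Complex.ofRealCLM.hasFDerivAt.comp_hasDerivAt t h1r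
  have h2 : HasDerivAt (fun t : ℝ => (((c * t + r / 2 * t ^ 2 : ℝ) : ℂ)))
      (((c + r * t : ℝ) : ℂ)) t := by
    simpa [Function.comp_def] using Complex.ofRealCLM.hasFDerivAt.comp_hasDerivAt t h2r
  have key := (h1.cexp.const_mul A).mul ((h2.const_mul (2 * (π:ℂ) * Complex.I)).cexp)
  rw [funext hEq]
  convert key using 1
  any_goals rfl
  unfold lamAux
  push_cast
  ring

lemma chirp_continuous (A : ℂ) (p q c r : ℝ) (x : ℝ → ℂ)
    (hx : ∀ t : ℝ, x t = A * Complex.exp (((p * t + q / 2 * t ^ 2 : ℝ) : ℂ)) *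
      Complex.exp (2 * π * Complex.I * (c * t + r / 2 * t ^ 2))) :
    Continuous x := by
  have hfun : x = fun t : ℝ => A * Complex.exp (((p * t + q / 2 * t ^ 2 : ℝ) : ℂ)) *
      Complex.exp (2 * π * Complex.I * (c * t + r / 2 * t ^ 2)) := funext hx
  rw [hfun]; fun_prop

lemma integrable_ccs (h : ℝ → ℂ) (hc : Continuous h) (K : ℝ)
    (h0 : ∀ t ∉ Set.Icc (-K) K, h t = 0) : Integrable h :=
  hc.integrable_of_hasCompactSupport (HasCompactSupport.intro isCompact_Icc h0)

lemma lemA (p q c r : ℝ) (x : ℝ → ℂ) (hxc : Continuous x)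
    (hx' : ∀ t : ℝ, HasDerivAt x (lamAux p q c r t * x t) t)
    (hlamc : Continuous (lamAux p q c r))
    (k : ℝ → ℂ) (hk : Continuous k) (K : ℝ) (hK : 0 ≤ K)
    (hk0 : ∀ t ∉ Set.Icc (-K) K, k t = 0) (b a : ℝ) :
    HasDerivAt (fun a' : ℝ => ∫ t : ℝ, x (b + a' * t) * k t)
      (∫ t : ℝ, lamAux p q c r (b + a * t) * x (b + a * t) * t * k t) a := by
  set F' : ℝ → ℝ → ℂ := fun a' t => lamAux p q c r (b + a' * t) * x (b + a' * t) * t * k t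
    with hF'
  have hF'cont : ∀ a', Continuous (F' a') := by
    intro a'; apply Continuous.mul; apply Continuous.mul; apply Continuous.mul
    · exact hlamc.comp (by fun_prop)
    · exact hxc.comp (by fun_prop)
    · fun_prop
    · exact hk
  have hjoint : Continuous (fun y : ℝ × ℝ => F' y.1 y.2) := by
    apply Continuous.mul; apply Continuous.mul; apply Continuous.mul
    · exact hlamc.comp (by fun_prop)
    · exact hxc.comp (by fun_prop)
    · fun_prop
    · exact hk.comp continuous_snd
  obtain ⟨C, hC⟩ := (((isCompact_closedBall a 1).prod isCompact_Icc).exists_bound_of_continuousOn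
    (hjoint.continuousOn (s := closedBall a 1 ×ˢ Set.Icc (-K) K)))
  set bnd : ℝ → ℝ := (Set.Icc (-K) K).indicator fun _ => C with hbnd
  have hmain := hasDerivAt_integral_of_dominated_loc_of_deriv_le (F := fun a' t => x (b + a' * t) * k t)
    (F' := F') (x₀ := a) (bound := bnd) (s := ball a 1) (μ := volume) (ball_mem_nhds a one_pos)
    (Filter.Eventually.of_forall fun a' =>
      ((hxc.comp (by fun_prop)).mul hk).aestronglyMeasurable)
    (((hxc.comp (by fun_prop : Continuous fun t : ℝ => b + a * t)).mul hk).integrable_of_hasCompactSupport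
      (HasCompactSupport.intro (K := Set.Icc (-K) K) isCompact_Icc fun t ht => by simp [hk0 t ht]))
    ((hF'cont a).aestronglyMeasurable)
    (Filter.Eventually.of_forall fun t => by
      intro a' ha'
      by_cases ht : t ∈ Set.Icc (-K) K
      · have : bnd t = C := by simp [hbnd, ht]
        rw [this]
        exact hC (a', t) ⟨ball_subset_closedBall ha', ht⟩
      · have h0 : F' a' t = 0 := by simp [hF', hk0 t ht]
        have : bnd t = 0 := by simp [hbnd, ht]
        simp [h0, this])
    (by rw [integrable_indicator_iff measurableSet_Icc]
        exact integrableOn_const measure_Icc_lt_top.ne)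
    (Filter.Eventually.of_forall fun t => by
      intro a' _
      have h1 : HasDerivAt (fun a' : ℝ => b + a' * t) t a' := by
        simpa using (hasDerivAt_mul_const t).const_add b
      have h2 := (HasDerivAt.scomp a' (hx' (b + a' * t)) h1).mul_const (k t)
      have h3 : F' a' t = (t • (lamAux p q c r (b + a' * t) * x (b + a' * t))) * k t := by
        simp only [hF', Complex.real_smul]; ring
      rw [h3]
      exact h2)
  exact hmain.2


lemma lemB (g : ℝ → ℂ) (hg : ContDiff ℝ 2 g)
    (M : ℝ) (hM : 0 ≤ M)
    (hgM : ∀ u : ℝ, M < |u| → g u = 0) (hgM' : ∀ u : ℝ, M < |u| → deriv g u = 0)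
    (σ : ℝ → ℝ) (hσdiff : Differentiable ℝ σ) (hσpos : ∀ b : ℝ, 0 < σ b)
    (μ p q c r : ℝ) (x : ℝ → ℂ) (hxc : Continuous x)
    (hx' : ∀ t : ℝ, HasDerivAt x (lamAux p q c r t * x t) t)
    (hlamc : Continuous (lamAux p q c r)) (a' b : ℝ) :
    HasDerivAt (fun b' : ℝ => ∫ t : ℝ, x (b' + a' * t) * (1 / (σ b' : ℂ)) * g (t / σ b') *
        Complex.exp (-2 * π * Complex.I * μ * t))
      ((∫ t : ℝ, lamAux p q c r (b + a' * t) * x (b + a' * t) * (1 / (σ b : ℂ)) * g (t / σ b) *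
          Complex.exp (-2 * π * Complex.I * μ * t))
        + deriv σ b • ∫ t : ℝ, x (b + a' * t) *
            (-(1 / (σ b : ℂ) ^ 2) * g (t / σ b) +
              (1 / (σ b : ℂ)) * deriv g (t / σ b) * ((-(t / (σ b) ^ 2) : ℝ) : ℂ)) *
            Complex.exp (-2 * π * Complex.I * μ * t)) b := by
  have hgd : Differentiable ℝ g := hg.differentiable (by norm_num)
  have hgc : Continuous g := hg.continuous
  have hg'c : Continuous (deriv g) := hg.continuous_deriv (by norm_num)
  set s₀ : ℝ := σ b with hs₀def
  have hs₀ : 0 < s₀ := hσpos b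
  set θ₀ : ℝ × ℝ := (b, s₀) with hθ₀
  set K : ℝ := 2 * s₀ * (M + 1) with hK
  have hKpos : 0 < K := by positivity
  set ε : ℝ := s₀ / 2 with hε
  have hεpos : 0 < ε := by positivity
  -- basic facts about θ in the closed ball
  have hmem : ∀ θ : ℝ × ℝ, θ ∈ closedBall θ₀ ε → s₀ / 2 ≤ θ.2 ∧ θ.2 ≤ 3 * s₀ / 2 := by
    intro θ hθ
    have h1 : dist θ.2 θ₀.2 ≤ dist θ θ₀ := by
      rw [Prod.dist_eq]; exact le_max_right _ _
    have h2 : |θ.2 - s₀| ≤ ε := by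
      rw [← Real.dist_eq]
      exact le_trans h1 (mem_closedBall.1 hθ)
    rw [abs_le] at h2
    constructor <;> [linarith [h2.1]; linarith [h2.2]]
  have hpos2 : ∀ θ : ℝ × ℝ, θ ∈ closedBall θ₀ ε → 0 < θ.2 := fun θ hθ => by
    have := (hmem θ hθ).1; linarith
  -- outside |t| ≤ K the g-factors vanish
  have hout : ∀ θ : ℝ × ℝ, θ ∈ closedBall θ₀ ε → ∀ t : ℝ, t ∉ Set.Icc (-K) K →
      g (t / θ.2) = 0 ∧ deriv g (t / θ.2) = 0 := by
    intro θ hθ t ht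
    obtain ⟨hl, hu⟩ := hmem θ hθ
    have hθ2 : 0 < θ.2 := by linarith
    have htabs : K < |t| := by
      simp only [Set.mem_Icc, not_and_or, not_le] at ht
      rcases ht with h | h
      · rw [abs_of_neg (by linarith)]; linarith
      · rw [abs_of_pos (by linarith)]; linarith
    have hMlt : M < |t / θ.2| := by
      rw [abs_div, abs_of_pos hθ2]
      rw [lt_div_iff₀ hθ2]
      have h3 : M * θ.2 ≤ M * (3 * s₀ / 2) := by
        apply mul_le_mul_of_nonneg_left hu hM
      have : M * (3 * s₀ / 2) < K := by rw [hK]; nlinarith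
      linarith
    exact ⟨hgM _ hMlt, hgM' _ hMlt⟩
  set E : ℝ → ℂ := fun t => Complex.exp (-2 * π * Complex.I * μ * t) with hE
  have hEc : Continuous E := by rw [hE]; fun_prop
  set Pb : (ℝ × ℝ) → ℝ → ℂ := fun θ t =>
    lamAux p q c r (θ.1 + a' * t) * x (θ.1 + a' * t) * (1 / (θ.2 : ℂ)) * g (t / θ.2) * E t
    with hPb
  set Ps : (ℝ × ℝ) → ℝ → ℂ := fun θ t =>
    x (θ.1 + a' * t) * (-(1 / (θ.2 : ℂ) ^ 2) * g (t / θ.2) +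
      (1 / (θ.2 : ℂ)) * deriv g (t / θ.2) * ((-(t / θ.2 ^ 2) : ℝ) : ℂ)) * E t with hPs
  set F' : (ℝ × ℝ) → ℝ → (ℝ × ℝ) →L[ℝ] ℂ := fun θ t =>
    (ContinuousLinearMap.fst ℝ ℝ ℝ).smulRight (Pb θ t) +
    (ContinuousLinearMap.snd ℝ ℝ ℝ).smulRight (Ps θ t) with hF'
  -- continuity on the compact set
  set S : Set ((ℝ × ℝ) × ℝ) := closedBall θ₀ ε ×ˢ Set.Icc (-K) K with hS
  have hSne : ∀ y ∈ S, y.1.2 ≠ 0 := by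
    intro y hy
    exact ne_of_gt (hpos2 y.1 hy.1)
  have hSneC : ∀ y ∈ S, ((y.1.2 : ℝ) : ℂ) ≠ 0 := by
    intro y hy; exact_mod_cast hSne y hy
  have hPbS : ContinuousOn (fun y : (ℝ × ℝ) × ℝ => Pb y.1 y.2) S := by
    rw [hPb]
    apply ContinuousOn.mul
    apply ContinuousOn.mul
    apply ContinuousOn.mul
    apply ContinuousOn.mul
    · exact (hlamc.comp (by fun_prop)).continuousOn
    · exact (hxc.comp (by fun_prop)).continuousOn
    · exact ContinuousOn.div continuousOn_const
        (Complex.continuous_ofReal.comp (continuous_snd.comp continuous_fst)).continuousOn hSneC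
    · exact hgc.comp_continuousOn
        (ContinuousOn.div continuous_snd.continuousOn
          (continuous_snd.comp continuous_fst).continuousOn hSne)
    · exact (hEc.comp continuous_snd).continuousOn
  have hPsS : ContinuousOn (fun y : (ℝ × ℝ) × ℝ => Ps y.1 y.2) S := by
    rw [hPs]
    apply ContinuousOn.mul
    apply ContinuousOn.mul
    · exact (hxc.comp (by fun_prop)).continuousOn
    · apply ContinuousOn.add
      · apply ContinuousOn.mul
        · apply ContinuousOn.neg
          exact ContinuousOn.div continuousOn_const
            ((Complex.continuous_ofReal.comp (continuous_snd.comp continuous_fst)).pow 2).continuousOn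
            (fun y hy => pow_ne_zero 2 (hSneC y hy))
        · exact hgc.comp_continuousOn
            (ContinuousOn.div continuous_snd.continuousOn
              (continuous_snd.comp continuous_fst).continuousOn hSne)
      · apply ContinuousOn.mul
        apply ContinuousOn.mul
        · exact ContinuousOn.div continuousOn_const
            (Complex.continuous_ofReal.comp (continuous_snd.comp continuous_fst)).continuousOn hSneC
        · exact hg'c.comp_continuousOn
            (ContinuousOn.div continuous_snd.continuousOn
              (continuous_snd.comp continuous_fst).continuousOn hSne)
        · apply Complex.continuous_ofReal.comp_continuousOn
          apply ContinuousOn.neg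
          exact ContinuousOn.div continuous_snd.continuousOn
            ((continuous_snd.comp continuous_fst).pow 2).continuousOn
            (fun y hy => pow_ne_zero 2 (hSne y hy))
    · exact (hEc.comp continuous_snd).continuousOn
  have hF'S : ContinuousOn (fun y : (ℝ × ℝ) × ℝ => F' y.1 y.2) S := by
    rw [hF']
    exact ((ContinuousLinearMap.smulRightL ℝ (ℝ × ℝ) ℂ
        (ContinuousLinearMap.fst ℝ ℝ ℝ)).continuous.comp_continuousOn hPbS).add
      ((ContinuousLinearMap.smulRightL ℝ (ℝ × ℝ) ℂ
        (ContinuousLinearMap.snd ℝ ℝ ℝ)).continuous.comp_continuousOn hPsS)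
  obtain ⟨C, hC⟩ := (((isCompact_closedBall θ₀ ε).prod isCompact_Icc).exists_bound_of_continuousOn hF'S)
  set bnd : ℝ → ℝ := (Set.Icc (-K) K).indicator fun _ => C with hbnd
  -- vanishing of F' outside the support
  have hF'zero : ∀ θ : ℝ × ℝ, θ ∈ closedBall θ₀ ε → ∀ t : ℝ, t ∉ Set.Icc (-K) K → F' θ t = 0 := by
    intro θ hθ t ht
    obtain ⟨h1, h2⟩ := hout θ hθ t ht
    have hb0 : Pb θ t = 0 := by simp [hPb, h1]
    have hs0 : Ps θ t = 0 := by simp [hPs, h1, h2]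
    rw [hF']
    simp only [hb0, hs0]
    refine ContinuousLinearMap.ext fun v => ?_
    simp
  -- continuity of the integrands in t for fixed θ
  have hPbt : ∀ θ : ℝ × ℝ, Continuous (fun t => Pb θ t) := by
    intro θ
    rw [hPb]
    apply Continuous.mul
    apply Continuous.mul
    apply Continuous.mul
    apply Continuous.mul
    · exact hlamc.comp (by fun_prop)
    · exact hxc.comp (by fun_prop)
    · exact continuous_const
    · exact hgc.comp (by fun_prop)
    · exact hEc
  have hPst : ∀ θ : ℝ × ℝ, Continuous (fun t => Ps θ t) := by
    intro θ
    rw [hPs]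
    apply Continuous.mul
    apply Continuous.mul
    · exact hxc.comp (by fun_prop)
    · apply Continuous.add
      · exact continuous_const.mul (hgc.comp (by fun_prop))
      · apply Continuous.mul
        · exact continuous_const.mul (hg'c.comp (by fun_prop))
        · fun_prop
    · exact hEc
  have hF't : ∀ θ : ℝ × ℝ, Continuous (fun t => F' θ t) := by
    intro θ
    rw [hF']
    exact ((ContinuousLinearMap.smulRightL ℝ (ℝ × ℝ) ℂ
        (ContinuousLinearMap.fst ℝ ℝ ℝ)).continuous.comp (hPbt θ)).add
      ((ContinuousLinearMap.smulRightL ℝ (ℝ × ℝ) ℂ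
        (ContinuousLinearMap.snd ℝ ℝ ℝ)).continuous.comp (hPst θ))
  have hFcont : ∀ θ : ℝ × ℝ, Continuous (fun t : ℝ =>
      x (θ.1 + a' * t) * (1 / (θ.2 : ℂ)) * g (t / θ.2) * E t) := by
    intro θ
    apply Continuous.mul
    apply Continuous.mul
    apply Continuous.mul
    · exact hxc.comp (by fun_prop)
    · exact continuous_const
    · exact hgc.comp (by fun_prop)
    · exact hEc
  have hθ₀mem : θ₀ ∈ closedBall θ₀ ε := mem_closedBall_self hεpos.le
  -- the master application
  have hmaster := hasFDerivAt_integral_of_dominated_of_fderiv_le (μ := volume)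
    (F := fun (θ : ℝ × ℝ) (t : ℝ) => x (θ.1 + a' * t) * (1 / (θ.2 : ℂ)) * g (t / θ.2) * E t)
    (F' := F') (x₀ := θ₀) (bound := bnd) (s := ball θ₀ ε) (ball_mem_nhds θ₀ hεpos)
    (Filter.Eventually.of_forall fun θ => (hFcont θ).aestronglyMeasurable)
    ((hFcont θ₀).integrable_of_hasCompactSupport
      (HasCompactSupport.intro (K := Set.Icc (-K) K) isCompact_Icc fun t ht => by
        simp [(hout θ₀ hθ₀mem t ht).1]))
    ((hF't θ₀).aestronglyMeasurable)
    (Filter.Eventually.of_forall fun t => by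
      intro θ hθ
      by_cases ht : t ∈ Set.Icc (-K) K
      · have hbt : bnd t = C := by simp [hbnd, ht]
        rw [hbt]
        exact hC (θ, t) ⟨ball_subset_closedBall hθ, ht⟩
      · have h0 : F' θ t = 0 := hF'zero θ (ball_subset_closedBall hθ) t ht
        have hbt : bnd t = 0 := by simp [hbnd, ht]
        simp [h0, hbt])
    (by rw [hbnd, integrable_indicator_iff measurableSet_Icc]
        exact integrableOn_const measure_Icc_lt_top.ne)
    (Filter.Eventually.of_forall fun t => by
      intro θ hθ
      have hθ2pos : 0 < θ.2 := hpos2 θ (ball_subset_closedBall hθ)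
      have hθ2ne : θ.2 ≠ 0 := ne_of_gt hθ2pos
      have hθ2cne : ((θ.2 : ℝ) : ℂ) ≠ 0 := by exact_mod_cast hθ2ne
      -- first factor
      have hproj1 : HasFDerivAt (fun θ : ℝ × ℝ => θ.1 + a' * t)
          (ContinuousLinearMap.fst ℝ ℝ ℝ) θ := by
        simpa using (hasFDerivAt_fst (p := θ)).add_const (a' * t)
      have hx1 : HasFDerivAt (fun θ : ℝ × ℝ => x (θ.1 + a' * t))
          ((ContinuousLinearMap.fst ℝ ℝ ℝ).smulRight
            (lamAux p q c r (θ.1 + a' * t) * x (θ.1 + a' * t))) θ := by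
        have h := (hx' (θ.1 + a' * t)).hasFDerivAt.comp θ hproj1
        convert h using 1
        any_goals rfl
      -- second factor, one-dimensional
      have hofs : HasDerivAt (fun s : ℝ => ((s : ℝ) : ℂ)) 1 θ.2 := by
        simpa using (hasDerivAt_id θ.2).ofReal_comp
      have hinvC : HasDerivAt (fun z : ℂ => z⁻¹) (-(((θ.2 : ℝ) : ℂ) ^ 2)⁻¹) ((θ.2 : ℝ) : ℂ) :=
        hasDerivAt_inv hθ2cne
      have hinv : HasDerivAt (fun s : ℝ => 1 / ((s : ℝ) : ℂ)) (-(1 / (θ.2 : ℂ) ^ 2)) θ.2 := by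
        have h := HasDerivAt.scomp θ.2 hinvC hofs
        simp only [Function.comp_def, one_smul] at h
        have hval : -((((θ.2 : ℝ) : ℂ)) ^ 2)⁻¹ = -(1 / (θ.2 : ℂ) ^ 2) := by
          rw [one_div]
        rw [← hval]
        simp only [one_div]
        exact h
      have hq : HasDerivAt (fun s : ℝ => t / s) (-(t / θ.2 ^ 2)) θ.2 := by
        have h := (hasDerivAt_inv hθ2ne).const_mul t
        simp only [div_eq_mul_inv]
        convert h using 1
        any_goals rfl
        ring
      have houter : HasDerivAt g (deriv g (t / θ.2)) (t / θ.2) := (hgd _).hasDerivAt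
      have hgcomp : HasDerivAt (fun s : ℝ => g (t / s))
          (deriv g (t / θ.2) * ((-(t / θ.2 ^ 2) : ℝ) : ℂ)) θ.2 := by
        have h := HasDerivAt.scomp θ.2 houter hq
        simp only [Function.comp_def] at h
        convert h using 1
        any_goals rfl
        rw [Complex.real_smul]
        push_cast
        ring
      have hmul2 := hinv.mul hgcomp
      have hx2 : HasFDerivAt (fun θ : ℝ × ℝ => (1 / (θ.2 : ℂ)) * g (t / θ.2))
          ((ContinuousLinearMap.snd ℝ ℝ ℝ).smulRight
            (-(1 / (θ.2 : ℂ) ^ 2) * g (t / θ.2) +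
              (1 / (θ.2 : ℂ)) * (deriv g (t / θ.2) * ((-(t / θ.2 ^ 2) : ℝ) : ℂ)))) θ := by
        have h := hmul2.hasFDerivAt.comp θ (hasFDerivAt_snd (p := θ))
        convert h using 1
        any_goals rfl
      have hmul3 := (hx1.mul hx2).mul_const (E t)
      convert hmul3 using 1
      any_goals rfl
      · funext θ'
        simp only [Pi.mul_apply]
        ring
      · rw [hF', hPb, hPs]
        refine ContinuousLinearMap.ext fun v => ?_
        simp [ContinuousLinearMap.smulRight_apply, Complex.real_smul]
        push_cast
        ring)
  -- integrability of F' θ₀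
  have hF'int : Integrable (F' θ₀) volume :=
    (hF't θ₀).integrable_of_hasCompactSupport
      (HasCompactSupport.intro (K := Set.Icc (-K) K) isCompact_Icc fun t ht =>
        hF'zero θ₀ hθ₀mem t ht)
  -- compose with the path b' ↦ (b', σ b')
  have hpath : HasDerivAt (fun b' : ℝ => (b', σ b')) ((1 : ℝ), deriv σ b) b :=
    (hasDerivAt_id b).prodMk (hσdiff b).hasDerivAt
  have hcomp := hmaster.comp_hasDerivAt b hpath
  have hPbint : Integrable (Pb θ₀) volume := by
    have h := hF'int.apply_continuousLinearMap ((1 : ℝ), (0 : ℝ))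
    have he : ∀ t, F' θ₀ t ((1 : ℝ), (0 : ℝ)) = Pb θ₀ t := by
      intro t; rw [hF']; simp
    simpa [he] using h
  have hPsint : Integrable (Ps θ₀) volume := by
    have h := hF'int.apply_continuousLinearMap ((0 : ℝ), (1 : ℝ))
    have he : ∀ t, F' θ₀ t ((0 : ℝ), (1 : ℝ)) = Ps θ₀ t := by
      intro t; rw [hF']; simp
    simpa [he] using h
  have hval : (∫ t : ℝ, F' θ₀ t) ((1 : ℝ), deriv σ b)
      = (∫ t : ℝ, Pb θ₀ t) + deriv σ b • (∫ t : ℝ, Ps θ₀ t) := by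
    rw [ContinuousLinearMap.integral_apply hF'int]
    have he : ∀ t, F' θ₀ t ((1 : ℝ), deriv σ b) = Pb θ₀ t + deriv σ b • Ps θ₀ t := by
      intro t; rw [hF']; simp
    simp_rw [he]
    have hsmul : Integrable (fun t : ℝ => deriv σ b • Ps θ₀ t) volume :=
      hPsint.smul (deriv σ b)
    rw [integral_add hPbint hsmul, integral_smul]
  have hfinal := hcomp
  rw [Function.comp_def] at hfinal
  simp only at hfinal
  rw [hval] at hfinal
  exact hfinal


set_option maxHeartbeats 2000000 in
/-- Theorem 2: for an LFM signal, the second-order adaptive phase transformation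
`ω^{2adp}_x(a,b)` equals the instantaneous frequency `c + rb`. -/

theorem second_order_adaptive_phase_transformation_lfm
    (g : ℝ → ℂ) (hg : ContDiff ℝ 2 g) (hgsupp : HasCompactSupport g)
    (σ : ℝ → ℝ) (hσdiff : Differentiable ℝ σ) (hσpos : ∀ b : ℝ, 0 < σ b)
    (μ : ℝ) (A : ℂ) (p q c r : ℝ)
    (x : ℝ → ℂ)
    (hx : ∀ t : ℝ, x t = A * Complex.exp (((p * t + q / 2 * t ^ 2 : ℝ) : ℂ)) *
      Complex.exp (2 * π * Complex.I * (c * t + r / 2 * t ^ 2)))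
    (W W1 W2 : ℝ → ℝ → ℂ)
    (hW : ∀ a b : ℝ, W a b = ∫ t : ℝ, x (b + a * t) * (1 / (σ b : ℂ)) * g (t / σ b) *
      Complex.exp (-2 * π * Complex.I * μ * t))
    (hW1 : ∀ a b : ℝ, W1 a b = ∫ t : ℝ, x (b + a * t) * ((t : ℂ) / (σ b : ℂ) ^ 2) * g (t / σ b) *
      Complex.exp (-2 * π * Complex.I * μ * t))
    (hW2 : ∀ a b : ℝ, W2 a b = ∫ t : ℝ, x (b + a * t) * ((t : ℂ) / (σ b : ℂ) ^ 2) *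
      deriv g (t / σ b) * Complex.exp (-2 * π * Complex.I * μ * t))
    (a b : ℝ) (ha : 0 < a)
    (hW0 : W a b ≠ 0)
    (hU : deriv (fun a' : ℝ => (a' : ℂ) * W1 a' b / W a' b) a ≠ 0)
    (R0 : ℂ)
    (hR0 : R0 = (deriv (fun a' : ℝ => deriv (fun b' : ℝ => W a' b') b / W a' b) a
        + (((deriv σ b : ℝ) : ℂ) / (σ b : ℂ)) * deriv (fun a' : ℝ => W2 a' b / W a' b) a)
      / deriv (fun a' : ℝ => (a' : ℂ) * W1 a' b / W a' b) a)
    (ω : ℝ)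
    (hω : ω = (deriv (fun b' : ℝ => W a b') b / (2 * π * Complex.I * W a b)).re
      + (deriv σ b / σ b) * (W2 a b / (2 * π * Complex.I * W a b)).re
      - a * (W1 a b / (2 * π * Complex.I * W a b) * R0).re) :
    ω = c + r * b := by
  have hxc : Continuous x := chirp_continuous A p q c r x hx
  have hx' : ∀ t : ℝ, HasDerivAt x (lamAux p q c r t * x t) t := chirp_hasDerivAt A p q c r x hx
  have hlamc : Continuous (lamAux p q c r) := lamAux_continuous p q c r
  have hgc : Continuous g := hg.continuous
  have hgd : Differentiable ℝ g := hg.differentiable (by norm_num)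
  have hg'c : Continuous (deriv g) := hg.continuous_deriv (by norm_num)
  -- support bound for g
  obtain ⟨M0, hM0⟩ := hgsupp.isBounded.subset_closedBall 0
  set M : ℝ := max M0 0 with hMdef
  have hM : 0 ≤ M := le_max_right _ _
  have htsupp : ∀ u : ℝ, M < |u| → u ∉ tsupport g := by
    intro u hu hmem
    have h1 := hM0 hmem
    rw [mem_closedBall, dist_zero_right, Real.norm_eq_abs] at h1
    have : |u| ≤ M := le_trans h1 (le_max_left _ _)
    linarith
  have hgM : ∀ u : ℝ, M < |u| → g u = 0 := fun u hu =>
    image_eq_zero_of_notMem_tsupport (htsupp u hu)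
  have hgM' : ∀ u : ℝ, M < |u| → deriv g u = 0 := by
    intro u hu
    by_contra h
    exact htsupp u hu (support_deriv_subset (by simp [Function.mem_support, h]))
  have hs : 0 < σ b := hσpos b
  have hsne : σ b ≠ 0 := ne_of_gt hs
  have hsC : ((σ b : ℝ) : ℂ) ≠ 0 := by exact_mod_cast hsne
  -- vanishing outside a compact set for the fixed scale σ b
  set K0 : ℝ := σ b * (M + 1) with hK0
  have hK0pos : 0 < K0 := by positivity
  have houtK : ∀ t : ℝ, t ∉ Set.Icc (-K0) K0 → g (t / σ b) = 0 ∧ deriv g (t / σ b) = 0 := by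
    intro t ht
    have htabs : K0 < |t| := by
      simp only [Set.mem_Icc, not_and_or, not_le] at ht
      rcases ht with h | h
      · rw [abs_of_neg (by linarith)]; linarith
      · rw [abs_of_pos (by linarith)]; linarith
    have hMlt : M < |t / σ b| := by
      rw [abs_div, abs_of_pos hs, lt_div_iff₀ hs]
      nlinarith
    exact ⟨hgM _ hMlt, hgM' _ hMlt⟩
  -- continuity of various integrands in t
  have hcont0 : ∀ a' : ℝ, Continuous (fun t : ℝ => x (b + a' * t) * (1 / (σ b : ℂ)) *
      g (t / σ b) * Complex.exp (-2 * π * Complex.I * μ * t)) := by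
    intro a'
    apply Continuous.mul
    apply Continuous.mul
    apply Continuous.mul
    · exact hxc.comp (by fun_prop)
    · exact continuous_const
    · exact hgc.comp (by fun_prop)
    · fun_prop
  have hcont1 : ∀ a' : ℝ, Continuous (fun t : ℝ => x (b + a' * t) * ((t : ℂ) / (σ b : ℂ) ^ 2) *
      g (t / σ b) * Complex.exp (-2 * π * Complex.I * μ * t)) := by
    intro a'
    apply Continuous.mul
    apply Continuous.mul
    apply Continuous.mul
    · exact hxc.comp (by fun_prop)
    · fun_prop
    · exact hgc.comp (by fun_prop)
    · fun_prop
  have hcont2 : ∀ a' : ℝ, Continuous (fun t : ℝ => x (b + a' * t) * ((t : ℂ) / (σ b : ℂ) ^ 2) *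
      deriv g (t / σ b) * Complex.exp (-2 * π * Complex.I * μ * t)) := by
    intro a'
    apply Continuous.mul
    apply Continuous.mul
    apply Continuous.mul
    · exact hxc.comp (by fun_prop)
    · fun_prop
    · exact hg'c.comp (by fun_prop)
    · fun_prop
  have hint0 : ∀ a' : ℝ, Integrable (fun t : ℝ => x (b + a' * t) * (1 / (σ b : ℂ)) *
      g (t / σ b) * Complex.exp (-2 * π * Complex.I * μ * t)) :=
    fun a' => integrable_ccs _ (hcont0 a') K0 (fun t ht => by simp [(houtK t ht).1])
  have hint1 : ∀ a' : ℝ, Integrable (fun t : ℝ => x (b + a' * t) * ((t : ℂ) / (σ b : ℂ) ^ 2) *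
      g (t / σ b) * Complex.exp (-2 * π * Complex.I * μ * t)) :=
    fun a' => integrable_ccs _ (hcont1 a') K0 (fun t ht => by simp [(houtK t ht).1])
  have hint2 : ∀ a' : ℝ, Integrable (fun t : ℝ => x (b + a' * t) * ((t : ℂ) / (σ b : ℂ) ^ 2) *
      deriv g (t / σ b) * Complex.exp (-2 * π * Complex.I * μ * t)) :=
    fun a' => integrable_ccs _ (hcont2 a') K0 (fun t ht => by simp [(houtK t ht).2])
  -- the time derivative of W
  have hDb : ∀ a' : ℝ, HasDerivAt (fun b' : ℝ => W a' b')
      (lamAux p q c r b * W a' b + ((q : ℂ) + 2 * π * Complex.I * r) * a' * (σ b : ℂ) * W1 a' b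
        - (((deriv σ b : ℝ) : ℂ) / (σ b : ℂ)) * (W a' b + W2 a' b)) b := by
    intro a'
    have hfun : (fun b' : ℝ => W a' b') = fun b' : ℝ => ∫ t : ℝ, x (b' + a' * t) *
        (1 / (σ b' : ℂ)) * g (t / σ b') * Complex.exp (-2 * π * Complex.I * μ * t) :=
      funext fun b' => hW a' b'
    have h := lemB g hg M hM hgM hgM' σ hσdiff hσpos μ p q c r x hxc hx' hlamc a' b
    have e1 : (∫ t : ℝ, lamAux p q c r (b + a' * t) * x (b + a' * t) * (1 / (σ b : ℂ)) *
        g (t / σ b) * Complex.exp (-2 * π * Complex.I * μ * t))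
        = lamAux p q c r b * W a' b
          + (((q : ℂ) + 2 * π * Complex.I * r) * a' * (σ b : ℂ)) * W1 a' b := by
      rw [hW a' b, hW1 a' b, ← integral_const_mul, ← integral_const_mul,
        ← integral_add ((hint0 a').const_mul _) ((hint1 a').const_mul _)]
      refine integral_congr_ae (Filter.Eventually.of_forall fun t => ?_)
      simp only
      rw [lamAux_add p q c r b (a' * t)]
      push_cast
      field_simp
    have e2 : (∫ t : ℝ, x (b + a' * t) * (-(1 / (σ b : ℂ) ^ 2) * g (t / σ b) +
          (1 / (σ b : ℂ)) * deriv g (t / σ b) * ((-(t / (σ b) ^ 2) : ℝ) : ℂ)) *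
          Complex.exp (-2 * π * Complex.I * μ * t))
        = -(1 / (σ b : ℂ)) * (W a' b + W2 a' b) := by
      rw [hW a' b, hW2 a' b, ← integral_add (hint0 a') (hint2 a'), ← integral_const_mul]
      refine integral_congr_ae (Filter.Eventually.of_forall fun t => ?_)
      simp only
      push_cast
      field_simp
      ring
    rw [e1, e2] at h
    rw [hfun]
    convert h using 1
    rw [Complex.real_smul]
    push_cast
    field_simp
    ring
  have hWa : ∀ a' : ℝ, deriv (fun b' : ℝ => W a' b') b
      = lamAux p q c r b * W a' b + ((q : ℂ) + 2 * π * Complex.I * r) * a' * (σ b : ℂ) * W1 a' b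
        - (((deriv σ b : ℝ) : ℂ) / (σ b : ℂ)) * (W a' b + W2 a' b) :=
    fun a' => (hDb a').deriv
  -- differentiability in the scale variable
  have hk0c : Continuous (fun t : ℝ => (1 / (σ b : ℂ)) * g (t / σ b) *
      Complex.exp (-2 * π * Complex.I * μ * t)) := by
    apply Continuous.mul
    · exact continuous_const.mul (hgc.comp (by fun_prop))
    · fun_prop
  have hk1c : Continuous (fun t : ℝ => ((t : ℂ) / (σ b : ℂ) ^ 2) * g (t / σ b) *
      Complex.exp (-2 * π * Complex.I * μ * t)) := by
    apply Continuous.mul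
    · exact (by fun_prop : Continuous fun t : ℝ => ((t : ℂ) / (σ b : ℂ) ^ 2)).mul
        (hgc.comp (by fun_prop))
    · fun_prop
  have hk2c : Continuous (fun t : ℝ => ((t : ℂ) / (σ b : ℂ) ^ 2) * deriv g (t / σ b) *
      Complex.exp (-2 * π * Complex.I * μ * t)) := by
    apply Continuous.mul
    · exact (by fun_prop : Continuous fun t : ℝ => ((t : ℂ) / (σ b : ℂ) ^ 2)).mul
        (hg'c.comp (by fun_prop))
    · fun_prop
  have hWd : DifferentiableAt ℝ (fun a' : ℝ => W a' b) a := by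
    have hfun : (fun a' : ℝ => W a' b) = fun a' : ℝ => ∫ t : ℝ, x (b + a' * t) *
        ((1 / (σ b : ℂ)) * g (t / σ b) * Complex.exp (-2 * π * Complex.I * μ * t)) := by
      funext a'
      rw [hW a' b]
      congr 1
      funext t
      ring
    rw [hfun]
    exact (lemA p q c r x hxc hx' hlamc _ hk0c K0 hK0pos.le
      (fun t ht => by simp [(houtK t ht).1]) b a).differentiableAt
  have hW1d : DifferentiableAt ℝ (fun a' : ℝ => W1 a' b) a := by
    have hfun : (fun a' : ℝ => W1 a' b) = fun a' : ℝ => ∫ t : ℝ, x (b + a' * t) *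
        (((t : ℂ) / (σ b : ℂ) ^ 2) * g (t / σ b) * Complex.exp (-2 * π * Complex.I * μ * t)) := by
      funext a'
      rw [hW1 a' b]
      congr 1
      funext t
      ring
    rw [hfun]
    exact (lemA p q c r x hxc hx' hlamc _ hk1c K0 hK0pos.le
      (fun t ht => by simp [(houtK t ht).1]) b a).differentiableAt
  have hW2d : DifferentiableAt ℝ (fun a' : ℝ => W2 a' b) a := by
    have hfun : (fun a' : ℝ => W2 a' b) = fun a' : ℝ => ∫ t : ℝ, x (b + a' * t) *
        (((t : ℂ) / (σ b : ℂ) ^ 2) * deriv g (t / σ b) *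
          Complex.exp (-2 * π * Complex.I * μ * t)) := by
      funext a'
      rw [hW2 a' b]
      congr 1
      funext t
      ring
    rw [hfun]
    exact (lemA p q c r x hxc hx' hlamc _ hk2c K0 hK0pos.le
      (fun t ht => by simp [(houtK t ht).2]) b a).differentiableAt
  -- quotient derivatives
  have hQ : HasDerivAt (fun a' : ℝ => W a' b / W a' b) 0 a := by
    have h := hWd.hasDerivAt.div hWd.hasDerivAt hW0
    have hval : (deriv (fun a' : ℝ => W a' b) a * W a b - W a b * deriv (fun a' : ℝ => W a' b) a)
        / W a b ^ 2 = 0 := by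
      rw [mul_comm, sub_self, zero_div]
    rw [hval] at h
    exact h
  have hUdiff : DifferentiableAt ℝ (fun a' : ℝ => (a' : ℂ) * W1 a' b / W a' b) a := by
    apply DifferentiableAt.div _ hWd hW0
    exact (Complex.ofRealCLM.differentiable.differentiableAt).mul hW1d
  have hVdiff : DifferentiableAt ℝ (fun a' : ℝ => W2 a' b / W a' b) a :=
    hW2d.div hWd hW0
  have hUd := hUdiff.hasDerivAt
  have hVd := hVdiff.hasDerivAt
  -- derivative of the log-derivative quotient
  have hF : (fun a' : ℝ => deriv (fun b' : ℝ => W a' b') b / W a' b)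
      = fun a' : ℝ => (lamAux p q c r b - ((deriv σ b : ℝ) : ℂ) / (σ b : ℂ)) * (W a' b / W a' b)
        + (((q : ℂ) + 2 * π * Complex.I * r) * (σ b : ℂ)) * ((a' : ℂ) * W1 a' b / W a' b)
        - (((deriv σ b : ℝ) : ℂ) / (σ b : ℂ)) * (W2 a' b / W a' b) := by
    funext a'
    rw [hWa a']
    ring
  have hFd : HasDerivAt (fun a' : ℝ => deriv (fun b' : ℝ => W a' b') b / W a' b)
      ((((q : ℂ) + 2 * π * Complex.I * r) * (σ b : ℂ))
          * deriv (fun a' : ℝ => (a' : ℂ) * W1 a' b / W a' b) a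
        - (((deriv σ b : ℝ) : ℂ) / (σ b : ℂ)) * deriv (fun a' : ℝ => W2 a' b / W a' b) a) a := by
    rw [hF]
    have h := ((hQ.const_mul (lamAux p q c r b - ((deriv σ b : ℝ) : ℂ) / (σ b : ℂ))).add
      (hUd.const_mul (((q : ℂ) + 2 * π * Complex.I * r) * (σ b : ℂ)))).sub
      (hVd.const_mul (((deriv σ b : ℝ) : ℂ) / (σ b : ℂ)))
    convert h using 1
    any_goals rfl
    ring
  have hnum := hFd.deriv
  have hR0' : R0 = ((q : ℂ) + 2 * π * Complex.I * r) * (σ b : ℂ) := by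
    rw [hR0, hnum]
    rw [sub_add_cancel]
    exact mul_div_cancel_right₀ _ hU
  -- final computation of the real parts
  have h2π : ((π : ℝ) : ℂ) ≠ 0 := by exact_mod_cast Real.pi_ne_zero
  have h2πI : (2 * (π : ℂ) * Complex.I) ≠ 0 :=
    mul_ne_zero (mul_ne_zero two_ne_zero h2π) Complex.I_ne_zero
  have hinvI : (2 * (π : ℂ) * Complex.I)⁻¹ = -Complex.I * (2 * (π : ℂ))⁻¹ := by
    rw [mul_inv, Complex.inv_I]
    ring
  have hsplit : (lamAux p q c r b * W a b
        + ((q : ℂ) + 2 * π * Complex.I * r) * a * (σ b : ℂ) * W1 a b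
        - (((deriv σ b : ℝ) : ℂ) / (σ b : ℂ)) * (W a b + W2 a b)) / (2 * π * Complex.I * W a b)
      = lamAux p q c r b * (2 * (π : ℂ) * Complex.I)⁻¹
        - (((deriv σ b : ℝ) : ℂ) / (σ b : ℂ)) * (2 * (π : ℂ) * Complex.I)⁻¹
        + ((a : ℂ) * ((W1 a b / (2 * π * Complex.I * W a b))
            * (((q : ℂ) + 2 * π * Complex.I * r) * (σ b : ℂ))))
        - (((deriv σ b / σ b : ℝ) : ℂ) * (W2 a b / (2 * π * Complex.I * W a b))) := by
    have hWW : ∀ z : ℂ, z * W a b / (2 * ↑π * Complex.I * W a b) = z * (2 * ↑π * Complex.I)⁻¹ := by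
      intro z
      rw [div_eq_iff (mul_ne_zero h2πI hW0)]
      field_simp
    have hnum : lamAux p q c r b * W a b
        + ((q : ℂ) + 2 * π * Complex.I * r) * a * (σ b : ℂ) * W1 a b
        - (((deriv σ b : ℝ) : ℂ) / (σ b : ℂ)) * (W a b + W2 a b)
        = lamAux p q c r b * W a b
          + ((q : ℂ) + 2 * π * Complex.I * r) * a * (σ b : ℂ) * W1 a b
          - (((deriv σ b : ℝ) : ℂ) / (σ b : ℂ)) * W a b
          - (((deriv σ b : ℝ) : ℂ) / (σ b : ℂ)) * W2 a b := by ring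
    rw [hnum, sub_div, sub_div, add_div, hWW, hWW]
    push_cast
    ring
  have hΛre : (lamAux p q c r b * (2 * (π : ℂ) * Complex.I)⁻¹).re = c + r * b := by
    rw [hinvI]
    unfold lamAux
    simp [Complex.mul_re, Complex.mul_im, Complex.add_re, Complex.add_im]
    field_simp
  have hc2re : ((((deriv σ b : ℝ) : ℂ) / (σ b : ℂ)) * (2 * (π : ℂ) * Complex.I)⁻¹).re = 0 := by
    rw [hinvI]
    have : (((deriv σ b : ℝ) : ℂ) / (σ b : ℂ)) = ((deriv σ b / σ b : ℝ) : ℂ) := by push_cast; ring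
    rw [this]
    simp [Complex.mul_re, Complex.mul_im]
  rw [hω, hR0', hWa a, hsplit]
  simp only [Complex.add_re, Complex.sub_re, hΛre, hc2re, Complex.re_ofReal_mul]
  ring

end
end

section
/- Let ψ : ℝ → ℂ be continuously differentiable and compactly supported, and let s(t) = A e^{pt + (q/2)t²} e^{2πi(ct + (r/2)t²)} be an LFM signal with A ∈ ℂ, p, q, c, r ∈ ℝ. Define W_s(a, b) = ∫_ℝ s(b + at) conj(ψ(t)) dt and W^{ψ₁}_s(a, b) = ∫_ℝ s(b + at) t conj(ψ(t)) dt (the CWT with ψ₁(t) = t ψ(t)). Then for every a, b ∈ ℝ the partial derivative in b of W_s exists and ∂_b W_s(a, b) = (p + qb + 2πi(c + rb)) W_s(a, b) + (q + 2πir) a W^{ψ₁}_s(a, b). -/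
open Real MeasureTheory

/-- Time derivative of the CWT of an LFM signal:
`∂_b W_s(a,b) = (p+qb+2πi(c+rb)) W_s(a,b) + (q+2πir) a W^{ψ₁}_s(a,b)`. -/
theorem cwt_time_derivative_lfm
    (ψ : ℝ → ℂ) (hψ : ContDiff ℝ 1 ψ) (hψsupp : HasCompactSupport ψ)
    (A : ℂ) (p q c r : ℝ)
    (s : ℝ → ℂ)
    (hs : ∀ t : ℝ, s t = A * Complex.exp (((p * t + q / 2 * t ^ 2 : ℝ) : ℂ)) *
      Complex.exp (2 * π * Complex.I * (c * t + r / 2 * t ^ 2)))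
    (W W1 : ℝ → ℝ → ℂ)
    (hW : ∀ a b : ℝ, W a b = ∫ t : ℝ, s (b + a * t) * starRingEnd ℂ (ψ t))
    (hW1 : ∀ a b : ℝ, W1 a b = ∫ t : ℝ, s (b + a * t) * (t : ℂ) * starRingEnd ℂ (ψ t)) :
    ∀ a b : ℝ, HasDerivAt (fun b' => W a b')
      (((p : ℂ) + q * b + 2 * π * Complex.I * ((c : ℂ) + r * b)) * W a b
        + ((q : ℂ) + 2 * π * Complex.I * r) * a * W1 a b) b := by
  intro a b
  set c1 : ℂ := (p : ℂ) + 2 * π * Complex.I * c with hc1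
  set c2 : ℂ := (q : ℂ) + 2 * π * Complex.I * r with hc2
  -- rewrite s as a single exponential
  have hs' : ∀ u : ℝ, s u = A * Complex.exp (c1 * u + c2 / 2 * u ^ 2) := by
    intro u
    rw [hs u, mul_assoc, ← Complex.exp_add]
    congr 1
    push_cast [hc1, hc2]
    ring
  have hscont : Continuous s := by
    have : s = fun u : ℝ => A * Complex.exp (c1 * u + c2 / 2 * u ^ 2) := funext hs'
    rw [this]; fun_prop
  -- derivative of s
  have hsd : ∀ u : ℝ, HasDerivAt s ((c1 + c2 * u) * s u) u := by
    intro u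
    have h0 : HasDerivAt (fun v : ℝ => (v : ℂ)) 1 u := by
      exact (hasDerivAt_id u).ofReal_comp
    have hg : HasDerivAt (fun v : ℝ => c1 * v + c2 / 2 * v ^ 2) (c1 + c2 * u) u := by
      have h1 := h0.const_mul c1
      have h2 := (h0.mul h0).const_mul (c2 / 2)
      have h3 := h1.add h2
      have hfe : (fun v : ℝ => c1 * v + c2 / 2 * v ^ 2)
          = fun v : ℝ => c1 * v + c2 / 2 * ((v : ℂ) * v) := by
        funext v; ring
      rw [hfe]
      convert h3 using 1
      · rfl
      · rfl
      ring
    have hmain := (hg.cexp.const_mul A)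
    have hfun : s = fun v : ℝ => A * Complex.exp (c1 * v + c2 / 2 * v ^ 2) := funext hs'
    rw [hfun]
    convert hmain using 1
    · rfl
    ring
  -- set up differentiation under the integral sign
  set F : ℝ → ℝ → ℂ := fun x t => s (x + a * t) * starRingEnd ℂ (ψ t) with hF
  set F' : ℝ → ℝ → ℂ :=
    fun x t => (c1 + c2 * (x + a * t)) * s (x + a * t) * starRingEnd ℂ (ψ t) with hF'
  have hψcont : Continuous ψ := hψ.continuous
  have hFcont : ∀ x : ℝ, Continuous (F x) := by
    intro x; exact (hscont.comp (by fun_prop)).mul (Complex.continuous_conj.comp hψcont)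
  have hF'cont : ∀ x : ℝ, Continuous (F' x) := by
    intro x
    exact ((by fun_prop : Continuous fun t : ℝ => (c1 + c2 * (x + a * t))).mul
      (hscont.comp (by fun_prop))).mul (Complex.continuous_conj.comp hψcont)
  have hconjsupp : HasCompactSupport fun t : ℝ => starRingEnd ℂ (ψ t) :=
    hψsupp.comp_left (map_zero _)
  have hFsupp : ∀ x : ℝ, HasCompactSupport (F x) := fun x => hconjsupp.mul_left
  have hFint : ∀ x : ℝ, Integrable (F x) := fun x =>
    (hFcont x).integrable_of_hasCompactSupport (hFsupp x)
  -- bound on the derivative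
  obtain ⟨M, hM⟩ : ∃ M : ℝ, ∀ x ∈ Metric.closedBall b 1, ∀ t ∈ tsupport ψ,
      ‖(c1 + c2 * (x + a * t)) * s (x + a * t)‖ ≤ M := by
    have hcomp : IsCompact (Metric.closedBall b 1 ×ˢ tsupport ψ) :=
      (isCompact_closedBall b 1).prod hψsupp
    have hcont : ContinuousOn
        (fun pr : ℝ × ℝ => (c1 + c2 * (pr.1 + a * pr.2)) * s (pr.1 + a * pr.2))
        (Metric.closedBall b 1 ×ˢ tsupport ψ) := by
      apply Continuous.continuousOn
      exact (by fun_prop : Continuous fun pr : ℝ × ℝ => (c1 + c2 * (pr.1 + a * pr.2))).mul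
        (hscont.comp (by fun_prop))
    obtain ⟨M, hM⟩ := hcomp.exists_bound_of_continuousOn hcont
    exact ⟨M, fun x hx t ht => hM (x, t) ⟨hx, ht⟩⟩
  have h_bound : ∀ᵐ t : ℝ, ∀ x ∈ Metric.ball b 1, ‖F' x t‖ ≤ M * ‖ψ t‖ := by
    filter_upwards with t x hx
    by_cases ht : t ∈ tsupport ψ
    · have h1 := hM x (Metric.ball_subset_closedBall hx) t ht
      have : ‖F' x t‖ = ‖(c1 + c2 * (x + a * t)) * s (x + a * t)‖ * ‖ψ t‖ := by
        simp [hF', norm_mul]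
      rw [this]
      exact mul_le_mul_of_nonneg_right h1 (norm_nonneg _)
    · have hψ0 : ψ t = 0 := image_eq_zero_of_notMem_tsupport ht
      simp [hF', hψ0]
  have hbound_int : Integrable (fun t : ℝ => M * ‖ψ t‖) :=
    ((hψcont.integrable_of_hasCompactSupport hψsupp).norm.const_mul M)
  have h_diff : ∀ᵐ t : ℝ, ∀ x ∈ Metric.ball b 1, HasDerivAt (fun x' => F x' t) (F' x t) x := by
    filter_upwards with t x _
    have h1 : HasDerivAt (fun x' : ℝ => x' + a * t) 1 x := (hasDerivAt_id x).add_const (a * t)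
    have h2 : HasDerivAt (fun x' : ℝ => s (x' + a * t))
        ((c1 + c2 * ((x : ℂ) + a * t)) * s (x + a * t)) x := by
      have := (hsd (x + a * t)).scomp x h1
      simp only [Function.comp_def, one_smul] at this
      convert this using 1
      · rfl
      push_cast
      ring
    have h3 := h2.mul_const (starRingEnd ℂ (ψ t))
    simpa [hF'] using h3
  have hmain := hasDerivAt_integral_of_dominated_loc_of_deriv_le (F := F) (F' := F')
    (x₀ := b) (bound := fun t => M * ‖ψ t‖) (Metric.ball_mem_nhds b zero_lt_one)
    (Filter.Eventually.of_forall fun x => (hFcont x).aestronglyMeasurable)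
    (hFint b) ((hF'cont b).aestronglyMeasurable) h_bound hbound_int h_diff
  obtain ⟨-, hder⟩ := hmain
  -- compute the value of the derivative integral
  have hint1 : Integrable (fun t : ℝ => s (b + a * t) * starRingEnd ℂ (ψ t)) := hFint b
  have hint2 : Integrable (fun t : ℝ => s (b + a * t) * (t : ℂ) * starRingEnd ℂ (ψ t)) := by
    have hc : Continuous fun t : ℝ => s (b + a * t) * (t : ℂ) * starRingEnd ℂ (ψ t) :=
      ((hscont.comp (by fun_prop)).mul (by fun_prop)).mul (Complex.continuous_conj.comp hψcont)
    have hsupp : HasCompactSupport fun t : ℝ => s (b + a * t) * (t : ℂ) * starRingEnd ℂ (ψ t) :=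
      hconjsupp.mul_left
    exact hc.integrable_of_hasCompactSupport hsupp
  have hval : (∫ t : ℝ, F' b t) =
      ((p : ℂ) + q * b + 2 * π * Complex.I * ((c : ℂ) + r * b)) * W a b
        + ((q : ℂ) + 2 * π * Complex.I * r) * a * W1 a b := by
    have heq : (fun t : ℝ => F' b t) = fun t : ℝ =>
        (c1 + c2 * b) * (s (b + a * t) * starRingEnd ℂ (ψ t))
          + (c2 * a) * (s (b + a * t) * (t : ℂ) * starRingEnd ℂ (ψ t)) := by
      funext t
      simp only [hF']
      ring
    rw [heq, integral_add (hint1.const_mul _) (hint2.const_mul _), integral_const_mul,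
      integral_const_mul, ← hW, ← hW1, hc1, hc2]
    ring
  have hWfun : (fun x : ℝ => ∫ t : ℝ, F x t) = fun b' => W a b' := by
    funext x; rw [hW]
  rw [hWfun, hval] at hder
  exact hder
end

section
/- Let ψ : ℝ → ℂ be twice continuously differentiable and compactly supported, and let s(t) = A e^{pt + (q/2)t²} e^{2πi(ct + (r/2)t²)} be an LFM signal with A ∈ ℂ, p, q, c, r ∈ ℝ. Define W_s(a, b) = ∫_ℝ s(b + at) conj(ψ(t)) dt, W^{ψ₁}_s(a, b) = ∫_ℝ s(b + at) t conj(ψ(t)) dt, and U(a, b) = ∂_a ( a W^{ψ₁}_s(a, b) / W_s(a, b) ). At any point (a, b) with a > 0, W_s(a, b) ≠ 0 and U(a, b) ≠ 0, the second-order phase transformation ω^{2nd}_s(a, b) = Re( ∂_b W_s(a,b) / (2πi W_s(a,b)) ) − a Re( ( W^{ψ₁}_s(a,b) / (W_s(a,b) U(a,b)) ) · ∂_a ( ∂_b W_s(a,b) / (2πi W_s(a,b)) ) ) satisfies ω^{2nd}_s(a, b) = c + r b, the instantaneous frequency of s at time b. -/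
open Real
set_option maxHeartbeats 1000000
open MeasureTheory


private lemma lfm_deriv {A L M : ℂ} {s : ℝ → ℂ}
    (hs : ∀ t : ℝ, s t = A * Complex.exp (L * t + M / 2 * t ^ 2)) (t : ℝ) :
    HasDerivAt s ((L + M * t) * s t) t := by
  have h1 : HasDerivAt (fun y : ℝ => (y : ℂ)) 1 t := by
    simpa using (hasDerivAt_id t).ofReal_comp
  have h2 : HasDerivAt (fun y : ℝ => L * (y:ℂ) + M / 2 * (y:ℂ) ^ 2) (L + M * t) t := by
    have h2' := (h1.const_mul L).add ((h1.mul h1).const_mul (M/2))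
    simp only [pow_two]
    refine h2'.congr_deriv ?_
    ring
  have h3 := (h2.cexp).const_mul A
  have : ∀ y : ℝ, A * Complex.exp (L * y + M / 2 * y ^ 2) = s y := fun y => (hs y).symm
  refine HasDerivAt.congr_deriv (h3.congr_of_eventuallyEq ?_) ?_
  · filter_upwards with y using (hs y)
  · rw [hs t]; ring

private lemma lfm_cont {A L M : ℂ} {s : ℝ → ℂ}
    (hs : ∀ t : ℝ, s t = A * Complex.exp (L * t + M / 2 * t ^ 2)) :
    Continuous s := by
  have : s = fun t : ℝ => A * Complex.exp (L * t + M / 2 * t ^ 2) := funext hs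
  rw [this]; fun_prop

private lemma lfm_int {ψ : ℝ → ℂ} (hψc : Continuous ψ) (hψsupp : HasCompactSupport ψ)
    {f : ℝ → ℂ} (hf : Continuous f) :
    Integrable (fun t : ℝ => f t * starRingEnd ℂ (ψ t)) := by
  have hsupp : HasCompactSupport (fun t : ℝ => f t * starRingEnd ℂ (ψ t)) := by
    have h1 : HasCompactSupport (fun t : ℝ => starRingEnd ℂ (ψ t)) :=
      hψsupp.comp_left (g := starRingEnd ℂ) (by simp)
    exact h1.mul_left
  exact (hf.mul (Complex.continuous_conj.comp hψc)).integrable_of_hasCompactSupport hsupp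

private lemma lfm_derivb {ψ s : ℝ → ℂ} {A L M : ℂ}
    (hs : ∀ t : ℝ, s t = A * Complex.exp (L * t + M / 2 * t ^ 2))
    (hψc : Continuous ψ) (hψsupp : HasCompactSupport ψ)
    {W W1 : ℝ → ℝ → ℂ}
    (hW : ∀ a b : ℝ, W a b = ∫ t : ℝ, s (b + a * t) * starRingEnd ℂ (ψ t))
    (hW1 : ∀ a b : ℝ, W1 a b = ∫ t : ℝ, s (b + a * t) * (t : ℂ) * starRingEnd ℂ (ψ t))
    (a' b' : ℝ) :
    HasDerivAt (fun x => W a' x) ((L + M * b') * W a' b' + M * a' * W1 a' b') b' := by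
  have hsc : Continuous s := lfm_cont hs
  set K := tsupport ψ with hK
  have hKc : IsCompact K := hψsupp
  set T : Set ℝ := (fun pr : ℝ × ℝ => pr.1 + a' * pr.2) '' (Metric.closedBall b' 1 ×ˢ K) with hT
  have hTc : IsCompact T :=
    ((isCompact_closedBall b' 1).prod hKc).image (by fun_prop)
  obtain ⟨C, hC⟩ := hTc.exists_bound_of_continuousOn
    (f := fun u => (L + M * u) * s u) (by fun_prop)
  set F : ℝ → ℝ → ℂ := fun x t => s (x + a' * t) * starRingEnd ℂ (ψ t) with hF
  set F' : ℝ → ℝ → ℂ := fun x t => (L + M * (x + a' * t)) * s (x + a' * t) * starRingEnd ℂ (ψ t)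
    with hF'
  have hbound : ∀ᵐ t : ℝ, ∀ x ∈ Metric.ball b' 1, ‖F' x t‖ ≤ C * ‖ψ t‖ := by
    filter_upwards with t
    intro x hx
    by_cases ht : t ∈ K
    · have hmem : x + a' * t ∈ T := ⟨(x, t), ⟨Metric.ball_subset_closedBall hx, ht⟩, rfl⟩
      have hnorm : ‖F' x t‖ = ‖(L + M * (↑x + ↑a' * ↑t)) * s (x + a' * t)‖ * ‖ψ t‖ := by
        simp only [hF', norm_mul, RCLike.norm_conj, mul_assoc]
      rw [hnorm]
      refine mul_le_mul_of_nonneg_right ?_ (norm_nonneg _)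
      have := hC _ hmem
      simpa using this
    · have hz : ψ t = 0 := image_eq_zero_of_notMem_tsupport ht
      simp [hF', hz]
  have hbint : Integrable (fun t : ℝ => C * ‖ψ t‖) := by
    refine Continuous.integrable_of_hasCompactSupport (by fun_prop) ?_
    exact (hψsupp.norm).mul_left
  have hdiff : ∀ᵐ t : ℝ, ∀ x ∈ Metric.ball b' 1, HasDerivAt (fun x => F x t) (F' x t) x := by
    filter_upwards with t
    intro x hx
    have h0 := lfm_deriv hs (x + a' * t)
    have h2 := (h0.comp_add_const x (a' * t)).mul_const (starRingEnd ℂ (ψ t))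
    have h3 : HasDerivAt (fun x : ℝ => F x t)
        ((L + M * ↑(x + a' * t)) * s (x + a' * t) * starRingEnd ℂ (ψ t)) x := h2
    have h4 : (L + M * ↑(x + a' * t)) * s (x + a' * t) * starRingEnd ℂ (ψ t) = F' x t := by
      simp only [hF']; push_cast; ring
    rw [h4] at h3
    exact h3
  have hmeas : ∀ᶠ x in nhds b', AEStronglyMeasurable (F x) volume := by
    filter_upwards with x
    exact ((hsc.comp (by fun_prop : Continuous fun t : ℝ => x + a' * t)).mul
      (Complex.continuous_conj.comp hψc)).aestronglyMeasurable
  have hint : Integrable (F b') := lfm_int hψc hψsupp (hsc.comp (by fun_prop))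
  have hmeas' : AEStronglyMeasurable (F' b') volume := by
    refine Continuous.aestronglyMeasurable ?_
    have : Continuous fun t : ℝ => (L + M * (↑b' + ↑a' * ↑t)) * s (b' + a' * t) := by fun_prop
    exact this.mul (Complex.continuous_conj.comp hψc)
  have key := hasDerivAt_integral_of_dominated_loc_of_deriv_le (μ := volume)
      (F := F) (F' := F') (x₀ := b') (bound := fun t => C * ‖ψ t‖) (Metric.ball_mem_nhds b' one_pos)
      hmeas hint hmeas' hbound hbint hdiff
  have hder := key.2
  have heq : (∫ t : ℝ, F' b' t) = (L + M * b') * W a' b' + M * ↑a' * W1 a' b' := by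
    have h1 : Integrable (fun t : ℝ => (L + M * ↑b') * (s (b' + a' * t) * starRingEnd ℂ (ψ t))) :=
      (lfm_int hψc hψsupp (hsc.comp (by fun_prop))).const_mul _
    have h2 : Integrable (fun t : ℝ => (M * ↑a') * (s (b' + a' * t) * (t:ℂ) * starRingEnd ℂ (ψ t))) := by
      have h2a : Integrable (fun t : ℝ => ((M * ↑a') * (s (b' + a' * t) * (t:ℂ))) * starRingEnd ℂ (ψ t)) :=
        lfm_int hψc hψsupp (by fun_prop)
      exact h2a.congr (by filter_upwards with t; ring)
    have hsplit : (∫ t : ℝ, F' b' t) = ∫ t : ℝ,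
        ((L + M * ↑b') * (s (b' + a' * t) * starRingEnd ℂ (ψ t))
          + (M * ↑a') * (s (b' + a' * t) * (t:ℂ) * starRingEnd ℂ (ψ t))) := by
      congr 1; funext t; simp only [hF']; push_cast; ring
    rw [hsplit, integral_add h1 h2, MeasureTheory.integral_const_mul,
      MeasureTheory.integral_const_mul, hW, hW1]
  rw [← heq]
  have hfun : (fun x => W a' x) = fun x => ∫ t : ℝ, F x t := by
    funext x; rw [hW]
  rw [hfun]
  exact hder

private lemma lfm_conta {ψ s : ℝ → ℂ} (hsc : Continuous s)
    (hψc : Continuous ψ) (hψsupp : HasCompactSupport ψ)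
    {W : ℝ → ℝ → ℂ}
    (hW : ∀ a b : ℝ, W a b = ∫ t : ℝ, s (b + a * t) * starRingEnd ℂ (ψ t)) (b : ℝ) :
    Continuous (fun a' => W a' b) := by
  have hrw : ∀ a' : ℝ, W a' b = ∫ t in tsupport ψ, s (b + a' * t) * starRingEnd ℂ (ψ t) := by
    intro a'
    rw [hW]
    exact (setIntegral_eq_integral_of_forall_compl_eq_zero (fun t ht => by
      simp [image_eq_zero_of_notMem_tsupport ht])).symm
  have hcont : Continuous fun a' : ℝ => ∫ t in tsupport ψ, s (b + a' * t) * starRingEnd ℂ (ψ t) := by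
    apply continuous_parametric_integral_of_continuous
      (f := fun (a' : ℝ) (t : ℝ) => s (b + a' * t) * starRingEnd ℂ (ψ t)) _ hψsupp
    show Continuous fun pr : ℝ × ℝ => s (b + pr.1 * pr.2) * starRingEnd ℂ (ψ pr.2)
    exact (hsc.comp (by fun_prop)).mul (Complex.continuous_conj.comp (hψc.comp continuous_snd))
  have : (fun a' => W a' b) = fun a' : ℝ => ∫ t in tsupport ψ, s (b + a' * t) * starRingEnd ℂ (ψ t) :=
    funext hrw
  rw [this]; exact hcont

/-- The second-order phase transformation `ω^{2nd}_s(a,b)` of an LFM signal equals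
its instantaneous frequency `c + rb`. -/
theorem second_order_phase_transformation_lfm
    (ψ : ℝ → ℂ) (hψ : ContDiff ℝ 2 ψ) (hψsupp : HasCompactSupport ψ)
    (A : ℂ) (p q c r : ℝ)
    (s : ℝ → ℂ)
    (hs : ∀ t : ℝ, s t = A * Complex.exp (((p * t + q / 2 * t ^ 2 : ℝ) : ℂ)) *
      Complex.exp (2 * π * Complex.I * (c * t + r / 2 * t ^ 2)))
    (W W1 : ℝ → ℝ → ℂ)
    (hW : ∀ a b : ℝ, W a b = ∫ t : ℝ, s (b + a * t) * starRingEnd ℂ (ψ t))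
    (hW1 : ∀ a b : ℝ, W1 a b = ∫ t : ℝ, s (b + a * t) * (t : ℂ) * starRingEnd ℂ (ψ t))
    (a b : ℝ) (ha : 0 < a)
    (hW0 : W a b ≠ 0)
    (U : ℂ)
    (hUdef : U = deriv (fun a' : ℝ => (a' : ℂ) * W1 a' b / W a' b) a)
    (hU : U ≠ 0)
    (ω : ℝ)
    (hω : ω = (deriv (fun b' : ℝ => W a b') b / (2 * π * Complex.I * W a b)).re
      - a * (W1 a b / (W a b * U) *
          deriv (fun a' : ℝ => deriv (fun b' : ℝ => W a' b') b / (2 * π * Complex.I * W a' b)) a).re) :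
    ω = c + r * b := by
  have hψc : Continuous ψ := hψ.continuous
  set L : ℂ := (p : ℂ) + 2 * π * Complex.I * c with hL
  set M : ℂ := (q : ℂ) + 2 * π * Complex.I * r with hM
  have hs' : ∀ t : ℝ, s t = A * Complex.exp (L * t + M / 2 * t ^ 2) := by
    intro t
    rw [hs, mul_assoc, ← Complex.exp_add]
    congr 1
    rw [hL, hM]
    congr 1
    push_cast
    ring
  have hsc : Continuous s := lfm_cont hs'
  have hD : (2 * (π:ℂ) * Complex.I) ≠ 0 := by
    simp [Real.pi_ne_zero, Complex.I_ne_zero, Complex.ofReal_ne_zero]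
  -- derivative in b
  have hDb : ∀ a' : ℝ, deriv (fun b' : ℝ => W a' b') b
      = (L + M * b) * W a' b + M * a' * W1 a' b := fun a' =>
    (lfm_derivb hs' hψc hψsupp hW hW1 a' b).deriv
  -- the function Φ
  set Φ : ℝ → ℂ := fun a' => deriv (fun b' : ℝ => W a' b') b / (2 * π * Complex.I * W a' b)
    with hΦdef
  have hΦ : ∀ a' : ℝ, W a' b ≠ 0 →
      Φ a' = (L + M * b) / (2 * π * Complex.I)
        + (M / (2 * π * Complex.I)) * ((a' : ℂ) * W1 a' b / W a' b) := by
    intro a' hne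
    simp only [hΦdef, hDb a']
    field_simp
  -- eventual nonvanishing of W · b near a
  have hWc : Continuous (fun a' : ℝ => W a' b) := lfm_conta hsc hψc hψsupp hW b
  have hne : ∀ᶠ a' in nhds a, W a' b ≠ 0 := (hWc.continuousAt).eventually_ne hW0
  have hEq : Φ =ᶠ[nhds a] fun a' => (L + M * b) / (2 * π * Complex.I)
      + (M / (2 * π * Complex.I)) * ((a' : ℂ) * W1 a' b / W a' b) := by
    filter_upwards [hne] with a' h using hΦ a' h
  have hderivΦ : deriv Φ a = (M / (2 * π * Complex.I)) * U := by
    rw [hEq.deriv_eq, deriv_const_add, deriv_const_mul_field, hUdef]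
  -- assemble
  have hterm2 : W1 a b / (W a b * U) * deriv Φ a = M * W1 a b / (2 * π * Complex.I * W a b) := by
    rw [hderivΦ]
    field_simp
  have hterm1 : Φ a = (L + M * b) / (2 * π * Complex.I)
      + (a : ℂ) * (M * W1 a b / (2 * π * Complex.I * W a b)) := by
    rw [hΦ a hW0]
    field_simp
    try ring
    try tauto
  have hre : ((L + M * b) / (2 * π * Complex.I)).re = c + r * b := by
    have : (L + M * b) / (2 * π * Complex.I)
        = ((p + q * b : ℝ) : ℂ) / (2 * π * Complex.I) + ((c + r * b : ℝ) : ℂ) := by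
      rw [hL, hM]
      field_simp
      push_cast
      ring
    rw [this]
    simp [Complex.div_re, Complex.normSq]
  rw [hω]
  show (Φ a).re - a * (W1 a b / (W a b * U) * deriv Φ a).re = c + r * b
  rw [hterm1, hterm2, Complex.add_re, Complex.re_ofReal_mul, hre]
  ring
end

section
/- Let g : ℝ → ℂ be continuously differentiable and compactly supported, let σ : ℝ → ℝ be differentiable with σ(b) > 0 for all b, let μ ∈ ℝ, and let s(t) = A e^{2πict} be a pure tone with A ∈ ℂ, c ∈ ℝ. Then for all a, b ∈ ℝ, ∂_b W̃_s(a, b) = 2πi c · W̃_s(a, b) − (σ'(b)/σ(b)) W̃_s(a, b) − (σ'(b)/σ(b)) W̃^{g2}_s(a, b). Consequently, at any (a, b) with W̃_s(a, b) ≠ 0, c = ∂_b W̃_s(a,b) / (2πi W̃_s(a,b)) + (σ'(b)/σ(b)) · W̃^{g2}_s(a,b) / (2πi W̃_s(a,b)) + σ'(b) / (2πi σ(b)). -/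
open Real

open MeasureTheory FourierTransform in
/-- Substitution `t = σ·u` turns the adaptive CWT of a pure tone into a Fourier integral. -/
lemma adaptive_cwt_repr (A : ℂ) (c a μ : ℝ) (σb : ℝ) (hσ : 0 < σb) (f : ℝ → ℂ) (b : ℝ) :
    (∫ t : ℝ, (A * Complex.exp (2 * π * Complex.I * c * (b + a * t))) * (1 / (σb : ℂ)) *
        f (t / σb) * Complex.exp (-2 * π * Complex.I * μ * t))
      = A * Complex.exp (2 * π * Complex.I * c * b) * 𝓕 f (-((c * a - μ) * σb)) := by
  have hσ0 : (σb : ℂ) ≠ 0 := by exact_mod_cast hσ.ne'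
  have hpt : (fun t : ℝ => (A * Complex.exp (2 * π * Complex.I * c * (b + a * t))) * (1 / (σb : ℂ)) *
        f (t / σb) * Complex.exp (-2 * π * Complex.I * μ * t))
      = fun t : ℝ => (A * Complex.exp (2 * π * Complex.I * c * b) * (1 / (σb : ℂ))) *
        (fun v : ℝ => Complex.exp (↑(-2 * π * v * (-((c * a - μ) * σb))) * Complex.I) • f v) (t / σb) := by
    funext t
    simp only [smul_eq_mul]
    have he : Complex.exp (2 * π * Complex.I * c * (b + a * t)) * Complex.exp (-2 * π * Complex.I * μ * t)
        = Complex.exp (2 * π * Complex.I * c * b) *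
          Complex.exp (↑(-2 * π * (t / σb) * (-((c * a - μ) * σb))) * Complex.I) := by
      rw [← Complex.exp_add, ← Complex.exp_add]
      congr 1
      push_cast
      field_simp
      ring
    calc (A * Complex.exp (2 * π * Complex.I * c * (b + a * t))) * (1 / (σb : ℂ)) *
        f (t / σb) * Complex.exp (-2 * π * Complex.I * μ * t)
        = (A * (1 / (σb : ℂ)) * f (t / σb)) *
          (Complex.exp (2 * π * Complex.I * c * (b + a * t)) * Complex.exp (-2 * π * Complex.I * μ * t)) := by ring
      _ = _ := by rw [he]; ring
  rw [hpt, MeasureTheory.integral_const_mul]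
  rw [MeasureTheory.Measure.integral_comp_div (fun v : ℝ => Complex.exp (↑(-2 * π * v * (-((c * a - μ) * σb))) * Complex.I) • f v) σb,
    abs_of_pos hσ, Real.fourier_real_eq_integral_exp_smul]
  rw [Complex.real_smul]
  field_simp
  ring_nf
  congr 1; congr 1; funext v; ring_nf

open MeasureTheory FourierTransform in
lemma adaptive_cwt_f1_hasDerivAt {g : ℝ → ℂ} (hg : ContDiff ℝ 1 g) (u : ℝ) :
    HasDerivAt (fun v : ℝ => (v : ℂ) * g v) (g u + u * deriv g u) u := by
  have h1 : HasDerivAt (fun v : ℝ => (v : ℂ)) 1 u := by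
    simpa using (hasDerivAt_id u).ofReal_comp
  have h2 : HasDerivAt g (deriv g u) u := (hg.differentiable one_ne_zero u).hasDerivAt
  have h3 := h1.mul h2
  simp only [one_mul] at h3
  exact h3

open MeasureTheory FourierTransform in
/-- Integration by parts for the Fourier integral of `u ↦ u · g'(u)`. -/
lemma adaptive_cwt_ibp {g : ℝ → ℂ} (hg : ContDiff ℝ 1 g) (hgsupp : HasCompactSupport g) (w : ℝ) :
    𝓕 (fun u : ℝ => (u : ℂ) * deriv g u) w
      = -(w : ℂ) * 𝓕 (fun u : ℝ => (-2 * π * Complex.I * u) • g u) w - 𝓕 g w := by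
  have hgc : Continuous g := hg.continuous
  have hg'c : Continuous (deriv g) := hg.continuous_deriv le_rfl
  set f₁ : ℝ → ℂ := fun v : ℝ => (v : ℂ) * g v with hf₁
  have hf₁supp : HasCompactSupport f₁ := by
    apply HasCompactSupport.mul_left hgsupp
  have hf₁c : Continuous f₁ := Complex.continuous_ofReal.mul hgc
  have hf₁int : Integrable f₁ := hf₁c.integrable_of_hasCompactSupport hf₁supp
  have hf₁diff : Differentiable ℝ f₁ := fun u => (adaptive_cwt_f1_hasDerivAt hg u).differentiableAt
  have hderiv₁ : deriv f₁ = fun u : ℝ => g u + u * deriv g u :=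
    funext fun u => (adaptive_cwt_f1_hasDerivAt hg u).deriv
  have hderiv₁c : Continuous (deriv f₁) := by
    rw [hderiv₁]; exact hgc.add (Complex.continuous_ofReal.mul hg'c)
  have hderiv₁int : Integrable (deriv f₁) :=
    hderiv₁c.integrable_of_hasCompactSupport hf₁supp.deriv
  have hibp := Real.fourier_deriv hf₁int hf₁diff hderiv₁int
  have hD : 𝓕 (fun u : ℝ => (-2 * π * Complex.I * u) • g u) w
      = (-2 * π * Complex.I) * 𝓕 f₁ w := by
    rw [Real.fourier_real_eq_integral_exp_smul, Real.fourier_real_eq_integral_exp_smul,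
      ← MeasureTheory.integral_const_mul]
    congr 1; funext v; simp only [smul_eq_mul, hf₁]; ring
  have hec : Continuous fun v : ℝ => Complex.exp (↑(-2 * π * v * w) * Complex.I) := by fun_prop
  have hint1 : Integrable (fun v : ℝ => Complex.exp (↑(-2 * π * v * w) * Complex.I) * deriv f₁ v) := by
    apply Continuous.integrable_of_hasCompactSupport (hec.mul hderiv₁c)
    apply HasCompactSupport.mul_left hf₁supp.deriv
  have hint2 : Integrable (fun v : ℝ => Complex.exp (↑(-2 * π * v * w) * Complex.I) * g v) := by
    apply Continuous.integrable_of_hasCompactSupport (hec.mul hgc)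
    apply HasCompactSupport.mul_left hgsupp
  have hsub := MeasureTheory.integral_sub hint1 hint2
  have hsplit : 𝓕 (fun u : ℝ => (u : ℂ) * deriv g u) w = 𝓕 (deriv f₁) w - 𝓕 g w := by
    rw [Real.fourier_real_eq_integral_exp_smul, Real.fourier_real_eq_integral_exp_smul,
      Real.fourier_real_eq_integral_exp_smul]
    simp only [smul_eq_mul]
    rw [← hsub]
    congr 1; funext v; simp only [hderiv₁]; ring
  rw [hsplit, hibp, hD]
  simp only [smul_eq_mul]
  ring

open MeasureTheory FourierTransform in
/-- For a pure tone, the time derivative of the adaptive CWT satisfies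
`∂_b W̃_s = 2πic W̃_s − (σ'/σ) W̃_s − (σ'/σ) W̃^{g2}_s`, and consequently the
frequency `c` is recovered by the adaptive phase-transformation formula wherever
`W̃_s(a,b) ≠ 0`. -/
theorem adaptive_cwt_pure_tone_phase
    (g : ℝ → ℂ) (hg : ContDiff ℝ 1 g) (hgsupp : HasCompactSupport g)
    (σ : ℝ → ℝ) (hσdiff : Differentiable ℝ σ) (hσpos : ∀ b : ℝ, 0 < σ b)
    (μ : ℝ) (A : ℂ) (c : ℝ)
    (s : ℝ → ℂ)
    (hs : ∀ t : ℝ, s t = A * Complex.exp (2 * π * Complex.I * c * t))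
    (W W2 : ℝ → ℝ → ℂ)
    (hW : ∀ a b : ℝ, W a b = ∫ t : ℝ, s (b + a * t) * (1 / (σ b : ℂ)) * g (t / σ b) *
      Complex.exp (-2 * π * Complex.I * μ * t))
    (hW2 : ∀ a b : ℝ, W2 a b = ∫ t : ℝ, s (b + a * t) * ((t : ℂ) / (σ b : ℂ) ^ 2) *
      deriv g (t / σ b) * Complex.exp (-2 * π * Complex.I * μ * t)) :
    (∀ a b : ℝ, HasDerivAt (fun b' => W a b')
      (2 * π * Complex.I * c * W a b
        - (((deriv σ b : ℝ) : ℂ) / (σ b : ℂ)) * W a b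
        - (((deriv σ b : ℝ) : ℂ) / (σ b : ℂ)) * W2 a b) b)
    ∧ (∀ a b : ℝ, W a b ≠ 0 →
        (c : ℂ) = deriv (fun b' : ℝ => W a b') b / (2 * π * Complex.I * W a b)
          + (((deriv σ b : ℝ) : ℂ) / (σ b : ℂ)) * (W2 a b / (2 * π * Complex.I * W a b))
          + ((deriv σ b : ℝ) : ℂ) / (2 * π * Complex.I * (σ b : ℂ))) := by
  have hgc : Continuous g := hg.continuous
  have hgint : Integrable g := hgc.integrable_of_hasCompactSupport hgsupp
  have hxgint : Integrable (fun x : ℝ => x • g x) := by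
    apply Continuous.integrable_of_hasCompactSupport (by fun_prop)
    exact hgsupp.smul_left (f := fun x : ℝ => x)
  have hFder : ∀ w : ℝ, HasDerivAt (𝓕 g)
      (𝓕 (fun u : ℝ => (-2 * π * Complex.I * u) • g u) w) w := fun w =>
    Real.hasDerivAt_fourier hgint hxgint w
  -- representation of W
  have hWr : ∀ a b' : ℝ, W a b' = A * Complex.exp (2 * π * Complex.I * c * b') *
      𝓕 g (-((c * a - μ) * σ b')) := by
    intro a b'
    rw [hW a b']
    rw [show (∫ t : ℝ, s (b' + a * t) * (1 / (σ b' : ℂ)) * g (t / σ b') *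
        Complex.exp (-2 * π * Complex.I * μ * t))
      = ∫ t : ℝ, (A * Complex.exp (2 * π * Complex.I * c * (b' + a * t))) * (1 / (σ b' : ℂ)) *
        g (t / σ b') * Complex.exp (-2 * π * Complex.I * μ * t) from by
      congr 1; funext t; rw [hs]; push_cast; ring_nf]
    exact adaptive_cwt_repr A c a μ (σ b') (hσpos b') g b'
  -- representation of W2
  have hW2r : ∀ a b' : ℝ, W2 a b' = A * Complex.exp (2 * π * Complex.I * c * b') *
      𝓕 (fun u : ℝ => (u : ℂ) * deriv g u) (-((c * a - μ) * σ b')) := by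
    intro a b'
    have hσ0 : (σ b' : ℂ) ≠ 0 := by exact_mod_cast (hσpos b').ne'
    rw [hW2 a b']
    rw [show (∫ t : ℝ, s (b' + a * t) * ((t : ℂ) / (σ b' : ℂ) ^ 2) * deriv g (t / σ b') *
        Complex.exp (-2 * π * Complex.I * μ * t))
      = ∫ t : ℝ, (A * Complex.exp (2 * π * Complex.I * c * (b' + a * t))) * (1 / (σ b' : ℂ)) *
        ((fun v : ℝ => (v : ℂ) * deriv g v) (t / σ b')) * Complex.exp (-2 * π * Complex.I * μ * t) from by
      congr 1; funext t; rw [hs]; push_cast; field_simp; try ring]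
    exact adaptive_cwt_repr A c a μ (σ b') (hσpos b') (fun v : ℝ => (v : ℂ) * deriv g v) b'
  -- first part
  have part1 : ∀ a b : ℝ, HasDerivAt (fun b' => W a b')
      (2 * π * Complex.I * c * W a b
        - (((deriv σ b : ℝ) : ℂ) / (σ b : ℂ)) * W a b
        - (((deriv σ b : ℝ) : ℂ) / (σ b : ℂ)) * W2 a b) b := by
    intro a b
    have hσ0 : (σ b : ℂ) ≠ 0 := by exact_mod_cast (hσpos b).ne'
    have hfun : (fun b' => W a b') = fun b' : ℝ =>
        (A * Complex.exp (2 * π * Complex.I * c * b')) * 𝓕 g (-((c * a - μ) * σ b')) := by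
      funext b'; rw [hWr a b']
    rw [hfun]
    -- derivative of the exponential factor
    have h1 : HasDerivAt (fun b' : ℝ => A * Complex.exp (2 * π * Complex.I * c * b'))
        (2 * π * Complex.I * c * (A * Complex.exp (2 * π * Complex.I * c * b))) b := by
      have hz : HasDerivAt (fun z : ℂ => A * Complex.exp (2 * π * Complex.I * c * z))
          (A * (Complex.exp (2 * π * Complex.I * c * (b : ℂ)) * (2 * π * Complex.I * c))) (b : ℂ) := by
        simpa using (((hasDerivAt_id ((b : ℝ) : ℂ)).const_mul (2 * π * Complex.I * (c : ℂ))).cexp).const_mul A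
      have := hz.comp_ofReal
      convert this using 1
      ring
    -- derivative of the Fourier factor
    have hinner : HasDerivAt (fun b' : ℝ => -((c * a - μ) * σ b')) (-((c * a - μ) * deriv σ b)) b :=
      (((hσdiff b).hasDerivAt.const_mul (c * a - μ)).neg)
    have h2 : HasDerivAt (fun b' : ℝ => 𝓕 g (-((c * a - μ) * σ b')))
        ((-((c * a - μ) * deriv σ b)) •
          𝓕 (fun u : ℝ => (-2 * π * Complex.I * u) • g u) (-((c * a - μ) * σ b))) b := by
      have := HasDerivAt.scomp_of_eq (x := b) (h := fun b' : ℝ => -((c * a - μ) * σ b'))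
        (hFder (-((c * a - μ) * σ b))) hinner rfl
      exact this
    have hcomb := h1.mul h2
    refine hcomb.congr_deriv ?_
    symm
    rw [hWr a b, hW2r a b, adaptive_cwt_ibp hg hgsupp]
    simp only [smul_eq_mul, Complex.real_smul]
    push_cast
    field_simp
    ring
  refine ⟨part1, fun a b hWne => ?_⟩
  have hσ0 : (σ b : ℂ) ≠ 0 := by exact_mod_cast (hσpos b).ne'
  have hπ : (2 * π * Complex.I : ℂ) ≠ 0 := by
    simp [Real.pi_ne_zero, Complex.I_ne_zero, Complex.ofReal_ne_zero]
  have hd := (part1 a b).deriv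
  rw [hd]
  field_simp
  ring
end

section
/- Let g(t) = (1/√(2π)) e^{−t²/2} be the Gaussian window, σ : ℝ → (0, ∞), μ ∈ ℝ, and let s(t) = A e^{2πict} with A ∈ ℂ, c ∈ ℝ. Then for all a, b ∈ ℝ, W̃^{g2}_s(a, b) = (4π² σ(b)² (ac − μ)² − 1) · W̃_s(a, b), where W̃_s(a, b) = ∫_ℝ s(b + at) (1/σ(b)) g(t/σ(b)) e^{−2πiμt} dt and W̃^{g2}_s(a, b) = ∫_ℝ s(b + at) (t/σ(b)²) g'(t/σ(b)) e^{−2πiμt} dt. -/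
open Real MeasureTheory
open Complex hiding exp

noncomputable section

namespace AdaptiveCWT

/-- Derivative of the complex quadratic exponential. -/
lemma hasDerivAt_E (b θ : ℝ) (x : ℝ) :
    HasDerivAt (fun y : ℝ => Complex.exp (-(b : ℂ) * y ^ 2 + (θ : ℂ) * Complex.I * y))
      ((θ : ℂ) * Complex.I * Complex.exp (-(b : ℂ) * x ^ 2 + (θ : ℂ) * Complex.I * x)
        - 2 * b * ((x : ℂ) * Complex.exp (-(b : ℂ) * x ^ 2 + (θ : ℂ) * Complex.I * x))) x := by
  have h : HasDerivAt (fun z : ℂ => Complex.exp (-(b : ℂ) * z ^ 2 + (θ : ℂ) * Complex.I * z))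
      (Complex.exp (-(b : ℂ) * (x : ℂ) ^ 2 + (θ : ℂ) * Complex.I * x) *
        (-(b : ℂ) * (2 * (x : ℂ) ^ 1) + (θ : ℂ) * Complex.I * 1)) (x : ℂ) := by
    exact (((hasDerivAt_pow 2 (x : ℂ)).const_mul (-(b : ℂ))).add
      ((hasDerivAt_id (x : ℂ)).const_mul ((θ : ℂ) * Complex.I))).cexp
  have h2 := h.comp_ofReal
  convert h2 using 1
  ring

lemma norm_E (b θ : ℝ) (x : ℝ) :
    ‖Complex.exp (-(b : ℂ) * x ^ 2 + (θ : ℂ) * Complex.I * x)‖ = Real.exp (-b * x ^ 2) := by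
  have harg : -(b : ℂ) * x ^ 2 + (θ : ℂ) * Complex.I * x
      = ((-b * x ^ 2 : ℝ) : ℂ) + ((θ * x : ℝ) : ℂ) * Complex.I := by push_cast; ring
  rw [harg, Complex.norm_exp, Complex.add_re, Complex.ofReal_re,
    Complex.mul_I_re, Complex.ofReal_im]
  norm_num

lemma integrable_E (b θ : ℝ) (hb : 0 < b) :
    Integrable (fun x : ℝ => Complex.exp (-(b : ℂ) * x ^ 2 + (θ : ℂ) * Complex.I * x)) := by
  have := integrable_cexp_quadratic (b := (b : ℂ)) (by simpa using hb) ((θ : ℂ) * Complex.I) 0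
  simpa [mul_comm] using this

lemma contE (b θ : ℝ) :
    Continuous (fun x : ℝ => Complex.exp (-(b : ℂ) * x ^ 2 + (θ : ℂ) * Complex.I * x)) := by
  fun_prop

lemma integrable_pow_mul_E (b θ : ℝ) (hb : 0 < b) (k : ℕ) :
    Integrable (fun x : ℝ =>
      (x : ℂ) ^ k * Complex.exp (-(b : ℂ) * x ^ 2 + (θ : ℂ) * Complex.I * x)) := by
  have hg : Integrable (fun x : ℝ => |x| ^ k * Real.exp (-b * x ^ 2)) := by
    have h := integrable_rpow_mul_exp_neg_mul_sq hb (s := (k : ℝ)) (lt_of_lt_of_le neg_one_lt_zero (Nat.cast_nonneg k))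
    refine h.abs.congr (Filter.Eventually.of_forall fun x => ?_)
    simp only [Real.rpow_natCast]
    rw [abs_mul, _root_.abs_pow, Real.abs_exp]
  refine hg.mono' ?_ (Filter.Eventually.of_forall fun x => ?_)
  · exact ((Complex.continuous_ofReal.pow k).mul (contE b θ)).aestronglyMeasurable
  · rw [norm_mul, norm_pow, Complex.norm_real, Real.norm_eq_abs, norm_E]

/-- Second moment of the complex Gaussian with imaginary linear term. -/
lemma gaussian_second_moment (b θ : ℝ) (hb : 0 < b) :
    ∫ x : ℝ, (x : ℂ) ^ 2 * Complex.exp (-(b : ℂ) * x ^ 2 + (θ : ℂ) * Complex.I * x)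
      = ((1 / (2 * b) - θ ^ 2 / (4 * b ^ 2) : ℝ) : ℂ) *
        ∫ x : ℝ, Complex.exp (-(b : ℂ) * x ^ 2 + (θ : ℂ) * Complex.I * x) := by
  set E : ℝ → ℂ := fun x => Complex.exp (-(b : ℂ) * x ^ 2 + (θ : ℂ) * Complex.I * x) with hE
  show (∫ x : ℝ, (x : ℂ) ^ 2 * E x)
    = ((1 / (2 * b) - θ ^ 2 / (4 * b ^ 2) : ℝ) : ℂ) * ∫ x : ℝ, E x
  have h0 : Integrable E := integrable_E b θ hb
  have h1 : Integrable (fun x : ℝ => (x : ℂ) * E x) :=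
    (integrable_pow_mul_E b θ hb 1).congr
      (Filter.Eventually.of_forall fun x => by simp [hE, pow_one])
  have h2 : Integrable (fun x : ℝ => (x : ℂ) ^ 2 * E x) := integrable_pow_mul_E b θ hb 2
  -- first relation : ∫ (θI E - 2b x E) = 0
  have rel1 : (θ : ℂ) * Complex.I * (∫ x : ℝ, E x) - 2 * b * ∫ x : ℝ, (x : ℂ) * E x = 0 := by
    have := integral_eq_zero_of_hasDerivAt_of_integrable (f := E)
      (f' := fun x => (θ : ℂ) * Complex.I * E x - 2 * b * ((x : ℂ) * E x))
      (fun x => hasDerivAt_E b θ x)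
      (((h0.const_mul _)).sub ((h1.const_mul _))) h0
    rw [integral_sub (h0.const_mul _) (h1.const_mul _), integral_const_mul,
      integral_const_mul] at this
    exact this
  -- second relation : ∫ (E + θI x E - 2b x² E) = 0
  have hh1 : Integrable (fun x : ℝ => (θ : ℂ) * Complex.I * ((x : ℂ) * E x)) :=
    h1.const_mul _
  have hh2 : Integrable (fun x : ℝ => 2 * (b : ℂ) * ((x : ℂ) ^ 2 * E x)) :=
    h2.const_mul _
  have hh12 : Integrable (fun x : ℝ => (θ : ℂ) * Complex.I * ((x : ℂ) * E x)
      - 2 * (b : ℂ) * ((x : ℂ) ^ 2 * E x)) := hh1.sub hh2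
  have rel2 : (∫ x : ℝ, E x) + (θ : ℂ) * Complex.I * (∫ x : ℝ, (x : ℂ) * E x)
      - 2 * b * ∫ x : ℝ, (x : ℂ) ^ 2 * E x = 0 := by
    have hd : ∀ x : ℝ, HasDerivAt (fun y : ℝ => (y : ℂ) * E y)
        (E x + ((θ : ℂ) * Complex.I * ((x : ℂ) * E x) - 2 * b * ((x : ℂ) ^ 2 * E x))) x := by
      intro x
      have hre : HasDerivAt (fun y : ℝ => (y : ℂ)) 1 x := (hasDerivAt_id (x : ℂ)).comp_ofReal
      have := hre.mul (hasDerivAt_E b θ x)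
      refine this.congr_deriv ?_
      simp only [hE]
      ring
    have := integral_eq_zero_of_hasDerivAt_of_integrable
      (f' := fun x => E x + ((θ : ℂ) * Complex.I * ((x : ℂ) * E x)
        - 2 * b * ((x : ℂ) ^ 2 * E x)))
      hd (h0.add hh12) h1
    rw [integral_add h0 hh12, integral_sub hh1 hh2, integral_const_mul,
      integral_const_mul] at this
    linear_combination this
  have hbC : (b : ℂ) ≠ 0 := Complex.ofReal_ne_zero.mpr hb.ne'
  have hcoef : ((1 / (2 * b) - θ ^ 2 / (4 * b ^ 2) : ℝ) : ℂ)
      = 1 / (2 * (b : ℂ)) - (θ : ℂ) ^ 2 / (4 * (b : ℂ) ^ 2) := by push_cast; ring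
  have h4 : (4 * (b : ℂ) ^ 2) ≠ 0 :=
    mul_ne_zero (by norm_num) (pow_ne_zero 2 hbC)
  refine mul_left_cancel₀ h4 ?_
  rw [hcoef]
  have expand : (4 * (b : ℂ) ^ 2) * ((1 / (2 * (b : ℂ)) - (θ : ℂ) ^ 2 / (4 * (b : ℂ) ^ 2)) *
      ∫ x : ℝ, E x) = (2 * (b : ℂ) - (θ : ℂ) ^ 2) * ∫ x : ℝ, E x := by
    field_simp
    ring
  rw [expand]
  linear_combination (-(2 * (b : ℂ))) * rel2 - (θ : ℂ) * Complex.I * rel1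
    + (θ : ℂ) ^ 2 * (∫ x : ℝ, E x) * Complex.I_sq

end AdaptiveCWT

end

open Real
open scoped MeasureTheory

/-- For the Gaussian (Morlet) window and a pure tone,
`W̃^{g2}_s(a,b) = (4π²σ(b)²(ac−μ)² − 1) W̃_s(a,b)`. -/
theorem adaptive_cwt_gaussian_g2_identity
    (σ : ℝ → ℝ) (hσpos : ∀ b : ℝ, 0 < σ b)
    (μ c : ℝ) (A : ℂ)
    (g : ℝ → ℂ)
    (hg : ∀ t : ℝ, g t = ((1 / Real.sqrt (2 * π) : ℝ) : ℂ) * Complex.exp (-(t : ℂ) ^ 2 / 2))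
    (s : ℝ → ℂ)
    (hs : ∀ t : ℝ, s t = A * Complex.exp (2 * π * Complex.I * c * t))
    (W W2 : ℝ → ℝ → ℂ)
    (hW : ∀ a b : ℝ, W a b = ∫ t : ℝ, s (b + a * t) * (1 / (σ b : ℂ)) * g (t / σ b) *
      Complex.exp (-2 * π * Complex.I * μ * t))
    (hW2 : ∀ a b : ℝ, W2 a b = ∫ t : ℝ, s (b + a * t) * ((t : ℂ) / (σ b : ℂ) ^ 2) *
      deriv g (t / σ b) * Complex.exp (-2 * π * Complex.I * μ * t)) :
    ∀ a b : ℝ, W2 a b = (((4 * π ^ 2 * (σ b) ^ 2 * (a * c - μ) ^ 2 - 1 : ℝ)) : ℂ) * W a b := by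
  intro a b
  set K : ℂ := ((1 / Real.sqrt (2 * π) : ℝ) : ℂ) with hK
  -- derivative of g
  have hgfun : g = fun t : ℝ => K * Complex.exp (-(t : ℂ) ^ 2 / 2) := funext hg
  have hderivg : ∀ x : ℝ, deriv g x = K * (Complex.exp (-(x : ℂ) ^ 2 / 2) * (-(x : ℂ))) := by
    intro x
    have hF : HasDerivAt (fun z : ℂ => K * Complex.exp (-z ^ 2 / 2))
        (K * (Complex.exp (-(x : ℂ) ^ 2 / 2) * (-(x : ℂ)))) (x : ℂ) := by
      have h1 : HasDerivAt (fun z : ℂ => -z ^ 2 / 2) (-(x : ℂ)) (x : ℂ) := by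
        have := ((hasDerivAt_pow 2 (x : ℂ)).neg.div_const 2)
        refine this.congr_deriv ?_
        ring
      exact h1.cexp.const_mul K
    rw [hgfun]
    exact hF.comp_ofReal.deriv
  have hσ : (0 : ℝ) < σ b := hσpos b
  have hσC : (σ b : ℂ) ≠ 0 := Complex.ofReal_ne_zero.mpr hσ.ne'
  set b' : ℝ := 1 / (2 * σ b ^ 2) with hb'
  have hb'pos : 0 < b' := by positivity
  set θ : ℝ := 2 * π * (a * c - μ) with hθ
  set E : ℝ → ℂ := fun x => Complex.exp (-(b' : ℂ) * x ^ 2 + (θ : ℂ) * Complex.I * x) with hE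
  set C : ℂ := A * Complex.exp (2 * π * Complex.I * c * b) * (1 / (σ b : ℂ)) * K with hC
  -- exponent identity
  have hexp : ∀ t : ℝ, (2 * π * Complex.I * c * ((b + a * t : ℝ)) : ℂ)
      + (-(((t / σ b : ℝ)) : ℂ) ^ 2 / 2) + (-2 * π * Complex.I * μ * t)
      = 2 * π * Complex.I * c * b + (-(b' : ℂ) * t ^ 2 + (θ : ℂ) * Complex.I * t) := by
    intro t
    simp only [hb', hθ]
    push_cast
    field_simp
    ring
  -- W in canonical form
  have hWval : W a b = C * ∫ t : ℝ, E t := by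
    rw [hW]
    have hpt : ∀ t : ℝ, s (b + a * t) * (1 / (σ b : ℂ)) * g (t / σ b) *
        Complex.exp (-2 * π * Complex.I * μ * t) = C * E t := by
      intro t
      rw [hs, hg]
      have key : Complex.exp (2 * π * Complex.I * c * ((b + a * t : ℝ)))
          * Complex.exp (-(((t / σ b : ℝ)) : ℂ) ^ 2 / 2)
          * Complex.exp (-2 * π * Complex.I * μ * t)
          = Complex.exp (2 * π * Complex.I * c * b) * E t := by
        rw [hE, ← Complex.exp_add, ← Complex.exp_add, ← Complex.exp_add]
        exact congrArg Complex.exp (hexp t)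
      calc A * Complex.exp (2 * π * Complex.I * c * ((b + a * t : ℝ))) * (1 / (σ b : ℂ)) *
            (K * Complex.exp (-(((t / σ b : ℝ)) : ℂ) ^ 2 / 2)) *
            Complex.exp (-2 * π * Complex.I * μ * t)
          = (A * (1 / (σ b : ℂ)) * K) *
            (Complex.exp (2 * π * Complex.I * c * ((b + a * t : ℝ)))
              * Complex.exp (-(((t / σ b : ℝ)) : ℂ) ^ 2 / 2)
              * Complex.exp (-2 * π * Complex.I * μ * t)) := by push_cast; ring
        _ = (A * (1 / (σ b : ℂ)) * K) *
            (Complex.exp (2 * π * Complex.I * c * b) * E t) := by rw [key]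
        _ = C * E t := by rw [hC]; ring
    rw [integral_congr_ae (Filter.Eventually.of_forall hpt), integral_const_mul]
  -- W2 in canonical form
  have hW2val : W2 a b = (-(C / (σ b : ℂ) ^ 2)) * ∫ t : ℝ, (t : ℂ) ^ 2 * E t := by
    rw [hW2]
    have hpt : ∀ t : ℝ, s (b + a * t) * ((t : ℂ) / (σ b : ℂ) ^ 2) *
        deriv g (t / σ b) * Complex.exp (-2 * π * Complex.I * μ * t)
        = (-(C / (σ b : ℂ) ^ 2)) * ((t : ℂ) ^ 2 * E t) := by
      intro t
      rw [hs, hderivg]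
      have key : Complex.exp (2 * π * Complex.I * c * ((b + a * t : ℝ)))
          * Complex.exp (-(((t / σ b : ℝ)) : ℂ) ^ 2 / 2)
          * Complex.exp (-2 * π * Complex.I * μ * t)
          = Complex.exp (2 * π * Complex.I * c * b) * E t := by
        rw [hE, ← Complex.exp_add, ← Complex.exp_add, ← Complex.exp_add]
        exact congrArg Complex.exp (hexp t)
      have hcast : ((t / σ b : ℝ) : ℂ) = (t : ℂ) / (σ b : ℂ) := by push_cast; ring
      calc A * Complex.exp (2 * π * Complex.I * c * ((b + a * t : ℝ))) *
            ((t : ℂ) / (σ b : ℂ) ^ 2) *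
            (K * (Complex.exp (-(((t / σ b : ℝ)) : ℂ) ^ 2 / 2) * (-(((t / σ b : ℝ)) : ℂ)))) *
            Complex.exp (-2 * π * Complex.I * μ * t)
          = (-(A * K * (t : ℂ) ^ 2 / (σ b : ℂ) ^ 3)) *
            (Complex.exp (2 * π * Complex.I * c * ((b + a * t : ℝ)))
              * Complex.exp (-(((t / σ b : ℝ)) : ℂ) ^ 2 / 2)
              * Complex.exp (-2 * π * Complex.I * μ * t)) := by
            rw [hcast]; ring
        _ = (-(A * K * (t : ℂ) ^ 2 / (σ b : ℂ) ^ 3)) *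
            (Complex.exp (2 * π * Complex.I * c * b) * E t) := by rw [key]
        _ = (-(C / (σ b : ℂ) ^ 2)) * ((t : ℂ) ^ 2 * E t) := by rw [hC]; ring
    rw [integral_congr_ae (Filter.Eventually.of_forall hpt), integral_const_mul]
  -- apply the second moment formula
  have hmom := AdaptiveCWT.gaussian_second_moment b' θ hb'pos
  rw [← hE] at hmom
  rw [hW2val, hmom, hWval]
  have hcoef : ((1 / (2 * b') - θ ^ 2 / (4 * b' ^ 2) : ℝ) : ℂ)
      = (σ b : ℂ) ^ 2 - (θ : ℂ) ^ 2 * (σ b : ℂ) ^ 4 := by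
    rw [hb']
    push_cast
    field_simp
    ring
  rw [hcoef]
  have hθcast : ((4 * π ^ 2 * (σ b) ^ 2 * (a * c - μ) ^ 2 - 1 : ℝ) : ℂ)
      = (θ : ℂ) ^ 2 * (σ b : ℂ) ^ 2 - 1 := by
    rw [hθ]; push_cast; ring
  rw [hθcast]
  field_simp
  ring
end
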